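/- arXiv:2303.14671 — 2 statements merged into one kernel-verified Lean document; each statement's English description precedes it below -/
import Mathlib

section
/- Let G be a finite median graph, H a convex subgraph of G, and θ1, θ2 two crossing Θ-classes of G. If both θ1 and θ2 occur in H (i.e., each contains an edge of H), then θ1 and θ2 cross in H, i.e., H contains a θ1,θ2-alternating 4-cycle. -/
open SimpleGraph Polynomial

/-- The hypercube `Q_n`: vertices are functions `Fin n → Bool`, two vertices adjacent
iff they differ in exactly one coordinate. -/
def hypercube (n : ℕ) : SimpleGraph (Fin n → Bool) where
  Adj x y := ∃! i, x i ≠ y i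
  symm := by
    refine ⟨?_⟩
    rintro x y ⟨i, hi, hu⟩
    exact ⟨i, hi.symm, fun j hj => hu j hj.symm⟩
  loopless := by
    refine ⟨?_⟩
    rintro x ⟨i, hi, -⟩
    exact hi rfl

/-- `f` is an isometric embedding of `G` into `H` (distances are preserved); its image is
an isometric subgraph of `H`. -/
def IsIsometricEmbedding {V W : Type*} (G : SimpleGraph V) (H : SimpleGraph W)
    (f : V → W) : Prop :=
  Function.Injective f ∧ ∀ u v : V, H.dist (f u) (f v) = G.dist u v

/-- A partial cube: a connected graph isomorphic to an isometric subgraph of some hypercube. -/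
def IsPartialCube {V : Type*} (G : SimpleGraph V) : Prop :=
  G.Connected ∧ ∃ (n : ℕ) (f : V → (Fin n → Bool)), IsIsometricEmbedding G (hypercube n) f

/-- The Djoković–Winkler relation on (unordered) edges: `e = uv` and `f = xy` are related iff
`d(u,x) + d(v,y) ≠ d(u,y) + d(v,x)`. -/
def DWRel {V : Type*} (G : SimpleGraph V) (e f : Sym2 V) : Prop :=
  ∃ u v x y : V, e = s(u, v) ∧ f = s(x, y) ∧
    G.dist u x + G.dist v y ≠ G.dist u y + G.dist v x

/-- The set of edges of `G` that are Θ-related to `e`. -/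
def thetaClassOf {V : Type*} (G : SimpleGraph V) (e : Sym2 V) : Set (Sym2 V) :=
  {f | f ∈ G.edgeSet ∧ DWRel G e f}

/-- `C` is a Θ-class of `G`: the class of some edge of `G` under the Djoković–Winkler
relation. -/
def IsThetaClass {V : Type*} (G : SimpleGraph V) (C : Set (Sym2 V)) : Prop :=
  ∃ e ∈ G.edgeSet, C = thetaClassOf G e

/-- `W_{uv}`: the set of vertices strictly closer to `u` than to `v`. -/
def sideW {V : Type*} (G : SimpleGraph V) (u v : V) : Set V :=
  {w | G.dist u w < G.dist v w}

/-- Two Θ-classes `C₁ = F_{ab}` and `C₂ = F_{uv}` cross: all four sets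
`W_{ab} ∩ W_{uv}`, `W_{ba} ∩ W_{uv}`, `W_{ab} ∩ W_{vu}`, `W_{ba} ∩ W_{vu}` are nonempty. -/
def Crosses {V : Type*} (G : SimpleGraph V) (C₁ C₂ : Set (Sym2 V)) : Prop :=
  ∃ a b u v : V, G.Adj a b ∧ G.Adj u v ∧
    C₁ = thetaClassOf G s(a, b) ∧ C₂ = thetaClassOf G s(u, v) ∧
    (sideW G a b ∩ sideW G u v).Nonempty ∧ (sideW G b a ∩ sideW G u v).Nonempty ∧
    (sideW G a b ∩ sideW G v u).Nonempty ∧ (sideW G b a ∩ sideW G v u).Nonempty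

lemma Crosses.symm {V : Type*} {G : SimpleGraph V} {C₁ C₂ : Set (Sym2 V)}
    (h : Crosses G C₁ C₂) : Crosses G C₂ C₁ := by
  obtain ⟨a, b, u, v, hab, huv, h1, h2, n1, n2, n3, n4⟩ := h
  refine ⟨u, v, a, b, huv, hab, h2, h1, ?_, ?_, ?_, ?_⟩ <;> rw [Set.inter_comm]
  exacts [n1, n3, n2, n4]

/-- The crossing graph `G^#` of a partial cube `G`: vertices are the Θ-classes of `G`,
two Θ-classes being adjacent iff they cross. -/
def crossingGraph {V : Type*} (G : SimpleGraph V) :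
    SimpleGraph {C : Set (Sym2 V) // IsThetaClass G C} where
  Adj C₁ C₂ := C₁ ≠ C₂ ∧ Crosses G C₁.1 C₂.1
  symm := ⟨fun _ _ h => ⟨h.1.symm, h.2.symm⟩⟩
  loopless := ⟨fun _ h => h.1 rfl⟩

/-- A median graph: a connected graph in which every triple of vertices has a unique median. -/
def IsMedianGraph {V : Type*} (G : SimpleGraph V) : Prop :=
  G.Connected ∧ ∀ u v w : V, ∃! x : V,
    G.dist u x + G.dist x v = G.dist u v ∧
    G.dist u x + G.dist x w = G.dist u w ∧
    G.dist v x + G.dist x w = G.dist v w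

/-- `α_i(G)`: the number of induced subgraphs of `G` isomorphic to the `i`-cube. -/
noncomputable def cubeCount {V : Type*} (G : SimpleGraph V) (i : ℕ) : ℕ :=
  Nat.card {s : Set V // Nonempty ((G.induce s) ≃g hypercube i)}

/-- The cube polynomial `C(G,x) = Σ_i α_i(G) xⁱ`. -/
noncomputable def cubePoly {V : Type*} [Finite V] (G : SimpleGraph V) : Polynomial ℕ :=
  ∑ i ∈ Finset.range (Nat.card V + 1), Polynomial.C (cubeCount G i) * Polynomial.X ^ i

/-- `a_i(G)`: the number of `i`-cliques of `G` (note `a_0 = 1`, the empty clique). -/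
noncomputable def cliqueCount {V : Type*} (G : SimpleGraph V) (i : ℕ) : ℕ :=
  Nat.card {s : Finset V // G.IsNClique i s}

/-- The clique polynomial `Cl(G,x) = Σ_i a_i(G) xⁱ`. -/
noncomputable def cliquePoly {V : Type*} [Finite V] (G : SimpleGraph V) : Polynomial ℕ :=
  ∑ i ∈ Finset.range (Nat.card V + 1), Polynomial.C (cliqueCount G i) * Polynomial.X ^ i

/-- A set `S` of vertices is convex: every shortest path between vertices of `S`
stays inside `S`. -/
def ConvexSet {V : Type*} (G : SimpleGraph V) (S : Set V) : Prop :=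
  ∀ u ∈ S, ∀ v ∈ S, ∀ p : G.Walk u v, p.length = G.dist u v → ∀ y ∈ p.support, y ∈ S

/-- The convex hull of a vertex set: the smallest convex set containing it. -/
def gConvexHull {V : Type*} (G : SimpleGraph V) (S : Set V) : Set V :=
  ⋂₀ {T : Set V | ConvexSet G T ∧ S ⊆ T}

/-- The Θ-class `θ` occurs in (the subgraph of `G` induced by) `S`. -/
def OccursIn {V : Type*} (G : SimpleGraph V) (θ : Set (Sym2 V)) (S : Set V) : Prop :=
  ∃ a b : V, G.Adj a b ∧ a ∈ S ∧ b ∈ S ∧ s(a, b) ∈ θ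

/-- A `θ₁,θ₂`-alternating 4-cycle `u v w x u`: edges `uv, xw ∈ θ₁` and `ux, vw ∈ θ₂`. -/
def AltFourCycle {V : Type*} (G : SimpleGraph V) (θ₁ θ₂ : Set (Sym2 V)) (u v w x : V) : Prop :=
  G.Adj u v ∧ G.Adj v w ∧ G.Adj w x ∧ G.Adj x u ∧ u ≠ w ∧ v ≠ x ∧
  s(u, v) ∈ θ₁ ∧ s(x, w) ∈ θ₁ ∧ s(u, x) ∈ θ₂ ∧ s(v, w) ∈ θ₂

/-- A polynomial with nonnegative coefficients is unimodal. -/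
def PolyUnimodal (P : Polynomial ℕ) : Prop :=
  ∃ m : ℕ, (∀ i, i < m → P.coeff i ≤ P.coeff (i + 1)) ∧
    (∀ i, m ≤ i → P.coeff (i + 1) ≤ P.coeff i)

namespace MedAux

variable {V : Type*} {G : SimpleGraph V}

/-- existence part of the median -/
lemma med (hmed : IsMedianGraph G) (u v w : V) : ∃ x : V,
    G.dist u x + G.dist x v = G.dist u v ∧
    G.dist u x + G.dist x w = G.dist u w ∧
    G.dist v x + G.dist x w = G.dist v w :=
  (hmed.2 u v w).exists

lemma med_unique (hmed : IsMedianGraph G) {u v w x y : V}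
    (hx : G.dist u x + G.dist x v = G.dist u v ∧
      G.dist u x + G.dist x w = G.dist u w ∧
      G.dist v x + G.dist x w = G.dist v w)
    (hy : G.dist u y + G.dist y v = G.dist u v ∧
      G.dist u y + G.dist y w = G.dist u w ∧
      G.dist v y + G.dist y w = G.dist v w) : x = y :=
  ((hmed.2 u v w).unique hx hy)

/-- For an edge `xy` and any vertex `w`, distances to `x` and `y` differ by exactly one. -/
lemma step (hmed : IsMedianGraph G) {x y : V} (hxy : G.Adj x y) (w : V) :
    G.dist x w + 1 = G.dist y w ∨ G.dist y w + 1 = G.dist x w := by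
  have hc := hmed.1
  obtain ⟨m, h1, h2, h3⟩ := med hmed x y w
  have hxy1 : G.dist x y = 1 := SimpleGraph.dist_eq_one_iff_adj.mpr hxy
  have hyx1 : G.dist y x = 1 := by rw [SimpleGraph.dist_comm]; exact hxy1
  rw [hxy1] at h1
  rcases Nat.add_eq_one_iff.mp h1 with ⟨ha, hb⟩ | ⟨ha, hb⟩
  · have hm : x = m := hc.dist_eq_zero_iff.mp ha
    subst hm
    left
    rw [hyx1] at h3
    omega
  · have hm : m = y := hc.dist_eq_zero_iff.mp hb
    subst hm
    right
    rw [hxy1] at h2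
    omega

lemma not_equidist (hmed : IsMedianGraph G) {x y : V} (hxy : G.Adj x y) (w : V) :
    G.dist x w ≠ G.dist y w := by
  rcases step hmed hxy w with h | h <;> omega

/-- characterization of `sideW` membership for an edge -/
lemma side_char (hmed : IsMedianGraph G) {a b : V} (hab : G.Adj a b) (z : V) :
    z ∈ sideW G a b ↔ G.dist a z + 1 = G.dist b z := by
  have h := step hmed hab z
  constructor
  · intro hz; simp only [sideW, Set.mem_setOf_eq] at hz; omega
  · intro hz; simp only [sideW, Set.mem_setOf_eq]; omega

lemma side_not (hmed : IsMedianGraph G) {a b : V} (hab : G.Adj a b) (z : V) :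
    z ∉ sideW G a b ↔ G.dist b z + 1 = G.dist a z := by
  have h := step hmed hab z
  rw [side_char hmed hab]
  omega

/-- An edge `pq` crossing the cut of edge `ab` (with `p` on the `a`-side). -/
lemma cross_step (hmed : IsMedianGraph G) {a b p q : V} (hab : G.Adj a b) (hpq : G.Adj p q)
    (hp : p ∈ sideW G a b) (hq : q ∉ sideW G a b) :
    G.dist a p + 1 = G.dist a q ∧ G.dist b q + 1 = G.dist b p := by
  rw [side_char hmed hab] at hp
  rw [side_not hmed hab] at hq
  have h1 := step hmed hpq a
  have h2 := step hmed hpq b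
  rw [SimpleGraph.dist_comm (u := p) (v := a), SimpleGraph.dist_comm (u := q) (v := a)] at h1
  rw [SimpleGraph.dist_comm (u := p) (v := b), SimpleGraph.dist_comm (u := q) (v := b)] at h2
  omega


/-- distance along an adjacency chain -/
lemma chain_dist_le (hc : G.Connected) {c : ℕ → V} {m : ℕ}
    (hchain : ∀ i < m, G.Adj (c i) (c (i + 1))) :
    ∀ n i, i + n ≤ m → G.dist (c i) (c (i + n)) ≤ n := by
  intro n
  induction n with
  | zero => intro i _; simp
  | succ n ih =>
    intro i h
    have h1 : G.dist (c i) (c (i + n)) ≤ n := ih i (by omega)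
    have h2 : G.dist (c (i + n)) (c (i + n + 1)) = 1 :=
      SimpleGraph.dist_eq_one_iff_adj.mpr (hchain (i + n) (by omega))
    have := hc.dist_triangle (u := c i) (v := c (i + n)) (w := c (i + n + 1))
    have : G.dist (c i) (c (i + (n + 1))) ≤ n + 1 := by
      rw [show i + (n + 1) = i + n + 1 by omega]; omega
    exact this

/-- distances along a geodesic chain -/
lemma chain_geo (hc : G.Connected) {c : ℕ → V} {m : ℕ}
    (hchain : ∀ i < m, G.Adj (c i) (c (i + 1)))
    (hgeo : G.dist (c 0) (c m) = m) :
    ∀ i j, i ≤ j → j ≤ m → G.dist (c i) (c j) = j - i := by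
  intro i j hij hjm
  have h1 : G.dist (c 0) (c i) ≤ i := by
    have := chain_dist_le hc hchain i 0 (by omega); simpa using this
  have h2 : G.dist (c i) (c j) ≤ j - i := by
    have := chain_dist_le hc hchain (j - i) i (by omega)
    rwa [show i + (j - i) = j by omega] at this
  have h3 : G.dist (c j) (c m) ≤ m - j := by
    have := chain_dist_le hc hchain (m - j) j (by omega)
    rwa [show j + (m - j) = m by omega] at this
  have t1 := hc.dist_triangle (u := c 0) (v := c i) (w := c j)
  have t2 := hc.dist_triangle (u := c 0) (v := c j) (w := c m)
  omega

/-- quadrangle property of median graphs -/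
lemma quad (hmed : IsMedianGraph G) {a v x y : V} (hvx : G.Adj v x) (hvy : G.Adj v y)
    (hxy : G.dist x y = 2) (hax : G.dist a x + 1 = G.dist a v)
    (hay : G.dist a y + 1 = G.dist a v) :
    ∃ z : V, G.Adj x z ∧ G.Adj y z ∧ G.dist a z + 2 = G.dist a v := by
  have hc := hmed.1
  obtain ⟨z, h1, h2, h3⟩ := med hmed x y a
  rw [hxy] at h1
  rw [SimpleGraph.dist_comm (u := x) (v := a)] at h2
  rw [SimpleGraph.dist_comm (u := y) (v := a)] at h3
  rw [SimpleGraph.dist_comm (u := z) (v := a)] at h2 h3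
  -- h2 : dist x z + dist a z = dist a x, h3 : dist y z + dist a z = dist a y
  have hz1 : G.dist x z ≠ 0 := by
    intro h0
    have : x = z := hc.dist_eq_zero_iff.mp h0
    subst this
    -- then dist y x + ... : from h1, dist x y... use h3 vs h2: dist y x = 2
    rw [SimpleGraph.dist_comm (u := y) (v := x), hxy] at h3
    omega
  have hz2 : G.dist z y ≠ 0 := by
    intro h0
    have : z = y := hc.dist_eq_zero_iff.mp h0
    subst this
    rw [hxy] at h2
    omega
  have hx1 : G.dist x z = 1 := by omega
  have hy1 : G.dist z y = 1 := by omega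
  refine ⟨z, SimpleGraph.dist_eq_one_iff_adj.mp hx1, ?_, by omega⟩
  exact (SimpleGraph.dist_eq_one_iff_adj.mp hy1).symm

/-- a vertex between two vertices of a convex set lies in the set -/
lemma convex_between (hc : G.Connected) {S : Set V} (hS : ConvexSet G S) {x y z : V}
    (hx : x ∈ S) (hy : y ∈ S) (hbet : G.dist x z + G.dist z y = G.dist x y) : z ∈ S := by
  obtain ⟨p, hp⟩ := hc.exists_walk_length_eq_dist x z
  obtain ⟨q, hq⟩ := hc.exists_walk_length_eq_dist z y
  refine hS x hx y hy (p.append q) (by rw [SimpleGraph.Walk.length_append, hp, hq, hbet]) z ?_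
  rw [SimpleGraph.Walk.support_append]
  exact List.mem_append_left _ p.end_mem_support


/-- Core: no geodesic chain with both endpoints in a halfspace and all interior
vertices outside it. -/
lemma core (hmed : IsMedianGraph G) {a b : V} (hab : G.Adj a b) :
    ∀ N m (c : ℕ → V), 2 ≤ m → (∀ i < m, G.Adj (c i) (c (i + 1))) →
      G.dist (c 0) (c m) = m → c 0 ∈ sideW G a b → c m ∈ sideW G a b →
      (∀ i, 0 < i → i < m → c i ∉ sideW G a b) →
      (∑ i ∈ Finset.Ioo 0 m, G.dist a (c i)) = N → False := by
  have hc := hmed.1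
  intro N
  induction N using Nat.strong_induction_on with
  | _ N ih =>
  intro m c h2m hchain hgeo h0 hm hint hsum
  classical
  -- first step goes up
  have s01 : G.dist a (c 0) + 1 = G.dist a (c 1) :=
    (cross_step hmed hab (hchain 0 (by omega)) h0 (hint 1 (by omega) (by omega))).1
  -- last step comes down
  have sm : G.dist a (c m) + 1 = G.dist a (c (m - 1)) := by
    have hadj : G.Adj (c m) (c (m - 1)) := by
      have := hchain (m - 1) (by omega)
      rw [show m - 1 + 1 = m by omega] at this
      exact this.symm
    exact (cross_step hmed hab hadj hm (hint (m - 1) (by omega) (by omega))).1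
  -- first down-step
  have hex : ∃ i, i < m ∧ G.dist a (c (i + 1)) + 1 = G.dist a (c i) := by
    refine ⟨m - 1, by omega, ?_⟩
    rw [show m - 1 + 1 = m by omega]
    exact sm
  set P : ℕ → Prop := fun i => i < m ∧ G.dist a (c (i + 1)) + 1 = G.dist a (c i) with hP
  have hfind := Nat.find_spec hex
  set i := Nat.find hex with hidef
  have him : i < m := hfind.1
  have hdown : G.dist a (c (i + 1)) + 1 = G.dist a (c i) := hfind.2
  have hup : ∀ j, j ≤ i → G.dist a (c j) = G.dist a (c 0) + j := by
    intro j
    induction j with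
    | zero => simp
    | succ j ihj =>
      intro hji
      have h1 : G.dist a (c j) = G.dist a (c 0) + j := ihj (by omega)
      have hnot := Nat.find_min hex (m := j) (by omega)
      have hst := step hmed (hchain j (by omega)) a
      rw [SimpleGraph.dist_comm (u := c j) (v := a),
        SimpleGraph.dist_comm (u := c (j + 1)) (v := a)] at hst
      simp only [hP, not_and] at hnot
      have := hnot (by omega)
      omega
  have hi1 : 1 ≤ i := by
    by_contra h
    have : i = 0 := by omega
    rw [this] at hdown
    simp only [Nat.zero_add] at hdown
    omega
  have hsi : G.dist a (c i) = G.dist a (c 0) + i := hup i le_rfl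
  have hsi1 : G.dist a (c (i - 1)) + 1 = G.dist a (c i) := by
    have := hup (i - 1) (by omega)
    omega
  -- distance 2 across the peak
  have d2 : G.dist (c (i - 1)) (c (i + 1)) = 2 := by
    have := chain_geo hc hchain hgeo (i - 1) (i + 1) (by omega) (by omega)
    rwa [show i + 1 - (i - 1) = 2 by omega] at this
  have hadjx : G.Adj (c i) (c (i - 1)) := by
    have := hchain (i - 1) (by omega)
    rw [show i - 1 + 1 = i by omega] at this
    exact this.symm
  have hadjy : G.Adj (c i) (c (i + 1)) := hchain i him
  obtain ⟨z, hz1, hz2, hz3⟩ := quad hmed hadjx hadjy d2 hsi1 (by omega)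
  by_cases hzW : z ∈ sideW G a b
  · by_cases hm2 : m = 2
    · -- i = 1; two medians of (c 0, c 2, b)
      have hieq : i = 1 := by omega
      rw [hieq] at hz1 hz2 hz3 hsi hdown
      have hz1' : G.Adj (c 0) z := by simpa using hz1
      have hz2' : G.Adj (c 2) z := by simpa using hz2
      have hs2 : G.dist a (c 2) + 1 = G.dist a (c 1) := by simpa using hdown
      have hm' : c 2 ∈ sideW G a b := by rw [hm2] at hm; exact hm
      have hd01 : G.dist (c 0) (c 1) = 1 :=
        SimpleGraph.dist_eq_one_iff_adj.mpr (hchain 0 (by omega))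
      have hd12 : G.dist (c 1) (c 2) = 1 := by
        have := hchain 1 (by omega)
        simpa using SimpleGraph.dist_eq_one_iff_adj.mpr this
      have hd02 : G.dist (c 0) (c 2) = 2 := by
        have := hgeo; rw [hm2] at this; exact this
      have hd0z : G.dist (c 0) z = 1 := SimpleGraph.dist_eq_one_iff_adj.mpr hz1'
      have hdz2 : G.dist z (c 2) = 1 := by
        rw [SimpleGraph.dist_comm]; exact SimpleGraph.dist_eq_one_iff_adj.mpr hz2'
      have hdb0 : G.dist b (c 0) = G.dist a (c 0) + 1 := ((side_char hmed hab _).mp h0).symm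
      have hdb1 : G.dist b (c 1) + 1 = G.dist a (c 1) :=
        (side_not hmed hab _).mp (hint 1 (by omega) (by omega))
      have hdb2 : G.dist b (c 2) = G.dist a (c 2) + 1 := ((side_char hmed hab _).mp hm').symm
      have hdbz : G.dist b z = G.dist a z + 1 := ((side_char hmed hab _).mp hzW).symm
      have e1b : G.dist (c 1) b = G.dist b (c 1) := SimpleGraph.dist_comm
      have e0b : G.dist (c 0) b = G.dist b (c 0) := SimpleGraph.dist_comm
      have e2b : G.dist (c 2) b = G.dist b (c 2) := SimpleGraph.dist_comm
      have ezb : G.dist z b = G.dist b z := SimpleGraph.dist_comm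
      have e21 : G.dist (c 2) (c 1) = G.dist (c 1) (c 2) := SimpleGraph.dist_comm
      have e2z : G.dist (c 2) z = G.dist z (c 2) := SimpleGraph.dist_comm
      have huniq : c 1 = z :=
        med_unique hmed (u := c 0) (v := c 2) (w := b)
          ⟨by omega, by omega, by omega⟩ ⟨by omega, by omega, by omega⟩
      rw [← huniq] at hzW
      exact hint 1 (by omega) (by omega) hzW
    · by_cases hi2 : 2 ≤ i
      · -- left split
        set c' : ℕ → V := fun j => if j < i then c j else z with hc'
        have hc'lt : ∀ j, j < i → c' j = c j := fun j hj => if_pos hj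
        have hc'i : c' i = z := if_neg (by omega)
        have hchain' : ∀ j < i, G.Adj (c' j) (c' (j + 1)) := by
          intro j hj
          rcases Nat.lt_or_ge (j + 1) i with h | h
          · rw [hc'lt j hj, hc'lt (j + 1) h]; exact hchain j (by omega)
          · have : j + 1 = i := by omega
            rw [hc'lt j hj, this, hc'i, show j = i - 1 by omega]
            exact hz1
        have hgeo' : G.dist (c' 0) (c' i) = i := by
          rw [hc'lt 0 (by omega), hc'i]
          have hle : G.dist (c' 0) (c' i) ≤ i := by
            have := chain_dist_le hc hchain' i 0 (by omega)
            simpa using this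
          rw [hc'lt 0 (by omega), hc'i] at hle
          have hge : i ≤ G.dist (c 0) z := by
            have h1 : G.dist (c 0) (c (i + 1)) = i + 1 := by
              have := chain_geo hc hchain hgeo 0 (i + 1) (by omega) (by omega)
              simpa using this
            have h2 : G.dist z (c (i + 1)) = 1 := by
              rw [SimpleGraph.dist_comm]; exact SimpleGraph.dist_eq_one_iff_adj.mpr hz2
            have := hc.dist_triangle (u := c 0) (v := z) (w := c (i + 1))
            omega
          omega
        have hN' : (∑ j ∈ Finset.Ioo 0 i, G.dist a (c' j)) < N := by
          have he : (∑ j ∈ Finset.Ioo 0 i, G.dist a (c' j))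
              = ∑ j ∈ Finset.Ioo 0 i, G.dist a (c j) := by
            refine Finset.sum_congr rfl fun j hj => ?_
            rw [hc'lt j (Finset.mem_Ioo.mp hj).2]
          rw [he, ← hsum]
          refine Finset.sum_lt_sum_of_subset ?_ (i := i) ?_ ?_ ?_ ?_
          · intro j hj
            simp only [Finset.mem_Ioo] at hj ⊢
            omega
          · simp only [Finset.mem_Ioo]; omega
          · simp
          · omega
          · intro j _ _; exact Nat.zero_le _
        exact ih _ hN' i c' hi2 hchain' hgeo'
          (by rw [hc'lt 0 (by omega)]; exact h0) (by rw [hc'i]; exact hzW)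
          (fun j hj1 hj2 => by rw [hc'lt j hj2]; exact hint j hj1 (by omega)) rfl
      · -- i = 1, right split
        have hieq : i = 1 := by omega
        set c' : ℕ → V := fun j => if j = 0 then z else c (j + 1) with hc'
        have hc'0 : c' 0 = z := rfl
        have hc'pos : ∀ j, 0 < j → c' j = c (j + 1) := fun j hj => if_neg (by omega)
        have hchain' : ∀ j < m - 1, G.Adj (c' j) (c' (j + 1)) := by
          intro j hj
          rcases Nat.eq_zero_or_pos j with h | h
          · subst h
            rw [hc'0, hc'pos 1 (by omega)]
            rw [hieq] at hz2
            exact hz2.symm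
          · rw [hc'pos j h, hc'pos (j + 1) (by omega)]
            exact hchain (j + 1) (by omega)
        have hc'last : c' (m - 1) = c m := by
          rw [hc'pos (m - 1) (by omega), show m - 1 + 1 = m by omega]
        have hgeo' : G.dist (c' 0) (c' (m - 1)) = m - 1 := by
          rw [hc'0, hc'last]
          have hle : G.dist (c' 0) (c' (m - 1)) ≤ m - 1 := by
            have := chain_dist_le hc hchain' (m - 1) 0 (by omega)
            simpa using this
          rw [hc'0, hc'last] at hle
          have hge : m - 1 ≤ G.dist z (c m) := by
            have h2 : G.dist (c 0) z = 1 := by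
              rw [hieq] at hz1
              exact SimpleGraph.dist_eq_one_iff_adj.mpr (by simpa using hz1)
            have := hc.dist_triangle (u := c 0) (v := z) (w := c m)
            omega
          omega
        have hsum' : (∑ j ∈ Finset.Ioo 0 (m - 1), G.dist a (c' j))
            = ∑ j ∈ Finset.Ioo 1 m, G.dist a (c j) := by
          have hmap : (Finset.Ioo 0 (m - 1)).map (addRightEmbedding 1) = Finset.Ioo 1 m := by
            rw [Finset.map_add_right_Ioo]
            congr 1
            omega
          rw [← hmap, Finset.sum_map]
          refine Finset.sum_congr rfl fun j hj => ?_
          simp only [Finset.mem_Ioo] at hj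
          rw [hc'pos j hj.1]
          rfl
        have hN' : (∑ j ∈ Finset.Ioo 0 (m - 1), G.dist a (c' j)) < N := by
          rw [hsum', ← hsum]
          refine Finset.sum_lt_sum_of_subset ?_ (i := 1) ?_ ?_ ?_ ?_
          · intro j hj; simp only [Finset.mem_Ioo] at hj ⊢; omega
          · simp only [Finset.mem_Ioo]; omega
          · simp
          · omega
          · intro j _ _; exact Nat.zero_le _
        exact ih _ hN' (m - 1) c' (by omega) hchain' hgeo'
          (by rw [hc'0]; exact hzW) (by rw [hc'last]; exact hm)
          (fun j hj1 hj2 => by rw [hc'pos j hj1]; exact hint (j + 1) (by omega) (by omega)) rfl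
  · -- z outside the halfspace
    have hbz : G.dist b z + 1 = G.dist a z := (side_not hmed hab _).mp hzW
    by_cases hieq1 : i = 1
    · -- contradiction at the left end
      rw [hieq1] at hz1 hsi
      simp only [show (1:ℕ) - 1 = 0 from rfl] at hz1
      have hst := step hmed hz1 b
      rw [SimpleGraph.dist_comm (u := c 0) (v := b), SimpleGraph.dist_comm (u := z) (v := b)] at hst
      have hdb0 : G.dist b (c 0) = G.dist a (c 0) + 1 := ((side_char hmed hab _).mp h0).symm
      rw [hieq1] at hz3
      omega
    · by_cases hieqm : i = m - 1
      · -- contradiction at the right end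
        have hz2' : G.Adj (c m) z := by rw [hieqm, show m - 1 + 1 = m by omega] at hz2; exact hz2
        have hst := step hmed hz2' b
        rw [SimpleGraph.dist_comm (u := c m) (v := b), SimpleGraph.dist_comm (u := z) (v := b)] at hst
        have hdbm : G.dist b (c m) = G.dist a (c m) + 1 := ((side_char hmed hab _).mp hm).symm
        rw [hieqm] at hz3
        omega
      · -- middle replacement, same length
        have hi2 : 2 ≤ i := by omega
        have him2 : i ≤ m - 2 := by omega
        set c' : ℕ → V := fun j => if j = i then z else c j with hc'
        have hc'i : c' i = z := if_pos rfl
        have hc'ne : ∀ j, j ≠ i → c' j = c j := fun j hj => if_neg hj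
        have hchain' : ∀ j < m, G.Adj (c' j) (c' (j + 1)) := by
          intro j hj
          by_cases h1 : j = i - 1
          · subst h1
            rw [hc'ne _ (by omega), show i - 1 + 1 = i by omega, hc'i]
            exact hz1
          · by_cases h2 : j = i
            · rw [h2, hc'i, hc'ne (i + 1) (by omega)]
              exact hz2.symm
            · rw [hc'ne j h2, hc'ne (j + 1) (by omega)]
              exact hchain j hj
        have hgeo' : G.dist (c' 0) (c' m) = m := by
          rw [hc'ne 0 (by omega), hc'ne m (by omega)]
          exact hgeo
        have he : (∑ j ∈ Finset.Ioo 0 m, G.dist a (c' j)) + 2 = N := by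
          rw [← hsum]
          have hmem : i ∈ Finset.Ioo 0 m := Finset.mem_Ioo.mpr ⟨by omega, by omega⟩
          rw [← Finset.add_sum_erase _ (fun j => G.dist a (c' j)) hmem, ← Finset.add_sum_erase _ (fun j => G.dist a (c j)) hmem]
          have : ∑ j ∈ (Finset.Ioo 0 m).erase i, G.dist a (c' j)
              = ∑ j ∈ (Finset.Ioo 0 m).erase i, G.dist a (c j) := by
            refine Finset.sum_congr rfl fun j hj => ?_
            rw [hc'ne j (Finset.ne_of_mem_erase hj)]
          rw [this, hc'i]
          omega
        exact ih _ (by omega) m c' h2m hchain' hgeo'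
          (by rw [hc'ne 0 (by omega)]; exact h0) (by rw [hc'ne m (by omega)]; exact hm)
          (fun j hj1 hj2 => by
            by_cases h : j = i
            · rw [h, hc'i]; exact hzW
            · rw [hc'ne j h]; exact hint j hj1 hj2) rfl


/-- Halfspaces of median graphs are (interval-)convex. -/
lemma side_convex (hmed : IsMedianGraph G) {a b : V} (hab : G.Adj a b) {x y z : V}
    (hx : x ∈ sideW G a b) (hy : y ∈ sideW G a b)
    (hbet : G.dist x z + G.dist z y = G.dist x y) : z ∈ sideW G a b := by
  classical
  by_contra hz
  have hc := hmed.1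
  obtain ⟨p, hp⟩ := hc.exists_walk_length_eq_dist x z
  obtain ⟨q, hq⟩ := hc.exists_walk_length_eq_dist z y
  set r := p.append q with hr
  have hrlen : r.length = G.dist x y := by
    rw [hr, SimpleGraph.Walk.length_append, hp, hq, hbet]
  set m := r.length with hmdef
  set c : ℕ → V := fun j => r.getVert j with hcdef
  have hchain : ∀ i < m, G.Adj (c i) (c (i + 1)) := fun i hi => r.adj_getVert_succ hi
  have hc0 : c 0 = x := r.getVert_zero
  have hcm : c m = y := r.getVert_length
  have hgeo : G.dist (c 0) (c m) = m := by rw [hc0, hcm, hrlen]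
  have hzsup : z ∈ r.support := by
    rw [hr, SimpleGraph.Walk.support_append]
    exact List.mem_append_left _ p.end_mem_support
  obtain ⟨k, hk1, hk2⟩ := SimpleGraph.Walk.mem_support_iff_exists_getVert.mp hzsup
  have hck : c k = z := hk1
  have hkm : k ≤ m := hk2
  have hk0 : k ≠ 0 := by intro h; apply hz; rw [← hck, h, hc0]; exact hx
  have hkm' : k ≠ m := by intro h; apply hz; rw [← hck, h, hcm]; exact hy
  set Q : ℕ → Prop := fun j => c j ∈ sideW G a b with hQ
  have hQ0 : Q 0 := by rw [hQ]; simpa [hc0] using hx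
  have hQk : ¬Q k := by rw [hQ]; simpa [hck] using hz
  set i0 := Nat.findGreatest Q k with hi0def
  have hi0P : Q i0 := Nat.findGreatest_spec (Nat.zero_le k) hQ0
  have hi0le : i0 ≤ k := Nat.findGreatest_le k
  have hi0k : i0 ≠ k := fun h => hQk (h ▸ hi0P)
  have hnot1 : ∀ j, i0 < j → j ≤ k → ¬Q j := fun j h1 h2 =>
    Nat.findGreatest_is_greatest h1 h2
  set R : ℕ → Prop := fun t => Q (k + t) with hR
  have hRmk : R (m - k) := by
    simp only [hR, hQ]
    rw [show k + (m - k) = m by omega, hcm]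
    exact hy
  have hexR : ∃ t, R t := ⟨m - k, hRmk⟩
  set t0 := Nat.find hexR with ht0def
  have hj0P : Q (k + t0) := Nat.find_spec hexR
  have ht0le : t0 ≤ m - k := Nat.find_min' hexR hRmk
  have hnot2 : ∀ t, t < t0 → ¬Q (k + t) := fun t ht => Nat.find_min hexR ht
  have ht01 : 1 ≤ t0 := by
    rcases Nat.eq_zero_or_pos t0 with h | h
    · exfalso; rw [h] at hj0P; simp at hj0P; exact hQk hj0P
    · exact h
  set j0 := k + t0 with hj0def
  have hj0m : j0 ≤ m := by omega
  -- apply core to the segment from i0 to j0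
  set c' : ℕ → V := fun j => c (i0 + j) with hc'def
  have hm' : 2 ≤ j0 - i0 := by omega
  refine core hmed hab (∑ j ∈ Finset.Ioo 0 (j0 - i0), G.dist a (c' j)) (j0 - i0) c' hm'
    ?_ ?_ ?_ ?_ ?_ rfl
  · intro j hj
    have := hchain (i0 + j) (by omega)
    rwa [show i0 + j + 1 = i0 + (j + 1) by omega] at this
  · have := chain_geo hc hchain hgeo i0 j0 (by omega) hj0m
    simp only [hc'def]
    rw [show i0 + 0 = i0 by omega, show i0 + (j0 - i0) = j0 by omega]
    exact this
  · simpa [hc'def] using hi0P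
  · simp only [hc'def]
    rw [show i0 + (j0 - i0) = j0 by omega]
    exact hj0P
  · intro j hj1 hj2
    simp only [hc'def]
    rcases le_or_gt (i0 + j) k with h | h
    · exact hnot1 (i0 + j) (by omega) h
    · have := hnot2 (i0 + j - k) (by omega)
      rwa [show k + (i0 + j - k) = i0 + j by omega] at this

/-- Along a geodesic between a vertex in `T` and one outside, there is an edge
crossing `T`, both of whose endpoints are metrically between the ends. -/
lemma exists_cross_edge (hc : G.Connected) {T U : Set V} {x y : V} (hx : x ∈ T) (hy : y ∉ T)
    (hU : ∀ z : V, G.dist x z + G.dist z y = G.dist x y → z ∈ U) :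
    ∃ p q : V, G.Adj p q ∧ p ∈ T ∧ q ∉ T ∧ p ∈ U ∧ q ∈ U := by
  classical
  obtain ⟨r, hr⟩ := hc.exists_walk_length_eq_dist x y
  set m := r.length with hmdef
  set c : ℕ → V := fun j => r.getVert j with hcdef
  have hchain : ∀ i < m, G.Adj (c i) (c (i + 1)) := fun i hi => r.adj_getVert_succ hi
  have hc0 : c 0 = x := r.getVert_zero
  have hcm : c m = y := r.getVert_length
  have hgeo : G.dist (c 0) (c m) = m := by rw [hc0, hcm, hr]
  have hbet : ∀ j, j ≤ m → G.dist x (c j) + G.dist (c j) y = G.dist x y := by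
    intro j hj
    have h1 := chain_geo hc hchain hgeo 0 j (by omega) hj
    have h2 := chain_geo hc hchain hgeo j m hj le_rfl
    rw [← hc0, ← hcm, h1, h2, hgeo]
    omega
  set Q : ℕ → Prop := fun j => c j ∉ T with hQ
  have hexQ : ∃ j, Q j := ⟨m, by rw [hQ]; simpa [hcm] using hy⟩
  set t := Nat.find hexQ with htdef
  have htP : c t ∉ T := Nat.find_spec hexQ
  have htm : t ≤ m := Nat.find_min' hexQ (by rw [hQ]; simpa [hcm] using hy)
  have ht1 : 1 ≤ t := by
    rcases Nat.eq_zero_or_pos t with h | h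
    · exfalso; rw [h] at htP; rw [hc0] at htP; exact htP hx
    · exact h
  have htprev : c (t - 1) ∈ T := by
    by_contra h
    exact Nat.find_min hexQ (m := t - 1) (by omega) h
  refine ⟨c (t - 1), c t, ?_, htprev, htP, hU _ (hbet (t - 1) (by omega)), hU _ (hbet t htm)⟩
  have := hchain (t - 1) (by omega)
  rwa [show t - 1 + 1 = t by omega] at this


lemma side_flip (hmed : IsMedianGraph G) {a b : V} (hab : G.Adj a b) (z : V) :
    z ∉ sideW G a b ↔ z ∈ sideW G b a :=
  (side_not hmed hab z).trans (side_char hmed hab.symm z).symm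

/-- an edge crossing the cut of `ab` is Θ-related to `ab` -/
lemma mem_theta_of_cross (hmed : IsMedianGraph G) {a b p q : V} (hab : G.Adj a b)
    (hpq : G.Adj p q) (hp : p ∈ sideW G a b) (hq : q ∉ sideW G a b) :
    s(p, q) ∈ thetaClassOf G s(a, b) := by
  refine ⟨hpq, a, b, p, q, rfl, rfl, ?_⟩
  have h1 := (side_char hmed hab p).mp hp
  have h2 := (side_not hmed hab q).mp hq
  omega

/-- an edge Θ-related to `ab` crosses the cut of `ab` -/
lemma cross_of_mem_theta (hmed : IsMedianGraph G) {a b p q : V} (hab : G.Adj a b)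
    (hpq : G.Adj p q) (hθ : s(p, q) ∈ thetaClassOf G s(a, b)) :
    (p ∈ sideW G a b ∧ q ∉ sideW G a b) ∨ (q ∈ sideW G a b ∧ p ∉ sideW G a b) := by
  obtain ⟨-, u', v', x', y', he1, he2, hne⟩ := hθ
  have key : G.dist a p + G.dist b q ≠ G.dist a q + G.dist b p := by
    rcases Sym2.eq_iff.mp he1 with ⟨h1, h2⟩ | ⟨h1, h2⟩ <;>
      rcases Sym2.eq_iff.mp he2 with ⟨h3, h4⟩ | ⟨h3, h4⟩ <;>
        subst h1 <;> subst h2 <;> subst h3 <;> subst h4 <;> omega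
  have hsp := step hmed hab p
  have hsq := step hmed hab q
  rcases hsp with hp | hp <;> rcases hsq with hq | hq
  · omega
  · exact Or.inl ⟨(side_char hmed hab p).mpr hp, (side_not hmed hab q).mpr hq⟩
  · exact Or.inr ⟨(side_char hmed hab q).mpr hq, (side_not hmed hab p).mpr hp⟩
  · omega

/-- main induction: a ladder from a cut-1 edge outside `W_uv` to a cut-1 edge inside
`W_uv`, all within the convex set `S`, yields an alternating square in `S`. -/
lemma main_ind (hmed : IsMedianGraph G) {S : Set V} (hS : ConvexSet G S)
    {a b u v : V} (hab : G.Adj a b) (huv : G.Adj u v) :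
    ∀ k : ℕ, ∀ p q x4 x3 : V, G.dist p x4 = k →
      p ∈ S → q ∈ S → x4 ∈ S → x3 ∈ S → G.Adj p q → G.Adj x4 x3 →
      p ∈ sideW G a b → q ∉ sideW G a b → x4 ∈ sideW G a b → x3 ∉ sideW G a b →
      p ∉ sideW G u v → q ∉ sideW G u v → x4 ∈ sideW G u v → x3 ∈ sideW G u v →
      ∃ w1 w2 w3 w4 : V, w1 ∈ S ∧ w2 ∈ S ∧ w3 ∈ S ∧ w4 ∈ S ∧
        AltFourCycle G (thetaClassOf G s(a, b)) (thetaClassOf G s(u, v)) w1 w2 w3 w4 := by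
  have hc := hmed.1
  intro k
  induction k using Nat.strong_induction_on with
  | _ k ih =>
  intro p q x4 x3 hk hpS hqS hx4S hx3S hpq hx43 hpW1 hqW1 hx4W1 hx3W1 hpW2 hqW2 hx4W2 hx3W2
  -- k is positive
  rcases Nat.eq_zero_or_pos k with hk0 | hkpos
  · exfalso
    rw [hk0] at hk
    have : p = x4 := hc.dist_eq_zero_iff.mp hk
    rw [this] at hpW2
    exact hpW2 hx4W2
  -- opposite-side memberships
  have hqW1' : q ∈ sideW G b a := (side_flip hmed hab q).mp hqW1
  have hx3W1' : x3 ∈ sideW G b a := (side_flip hmed hab x3).mp hx3W1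
  have hpW2' : p ∈ sideW G v u := (side_flip hmed huv p).mp hpW2
  have hqW2' : q ∈ sideW G v u := (side_flip hmed huv q).mp hqW2
  -- d q x3 = k  and  d p x3 = k + 1
  have hd43 : G.dist x4 x3 = 1 := SimpleGraph.dist_eq_one_iff_adj.mpr hx43
  have hdpq : G.dist p q = 1 := SimpleGraph.dist_eq_one_iff_adj.mpr hpq
  have hdpx3 : G.dist p x3 = k + 1 := by
    obtain ⟨m, h1, h2, h3⟩ := med hmed x4 x3 p
    rw [hd43] at h1
    rcases Nat.add_eq_one_iff.mp h1 with ⟨ha', hb'⟩ | ⟨ha', hb'⟩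
    · -- m = x4
      have hmx : x4 = m := hc.dist_eq_zero_iff.mp ha'
      rw [← hmx] at h3
      have e1 : G.dist x3 p = G.dist p x3 := SimpleGraph.dist_comm
      have e2 : G.dist x4 p = G.dist p x4 := SimpleGraph.dist_comm
      have e3 : G.dist x3 x4 = G.dist x4 x3 := SimpleGraph.dist_comm
      omega
    · -- m = x3 : contradiction, x3 between p and x4
      exfalso
      have hmx : m = x3 := hc.dist_eq_zero_iff.mp hb'
      rw [hmx] at h2
      apply hx3W1
      exact side_convex hmed hab hx4W1 hpW1 h2
  have hdqx3 : G.dist q x3 = k := by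
    obtain ⟨m, h1, h2, h3⟩ := med hmed p q x3
    rw [hdpq] at h1
    rcases Nat.add_eq_one_iff.mp h1 with ⟨ha', hb'⟩ | ⟨ha', hb'⟩
    · -- m = p : contradiction, p between q and x3
      exfalso
      have hmx : p = m := hc.dist_eq_zero_iff.mp ha'
      rw [← hmx] at h3
      apply (side_flip hmed hab p).mpr ?_ hpW1
      exact side_convex hmed hab.symm hqW1' hx3W1' h3
    · have hmx : m = q := hc.dist_eq_zero_iff.mp hb'
      rw [hmx] at h2 h3
      omega
  rcases Nat.lt_or_ge k 2 with hk1 | hk2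
  · -- base case : k = 1, direct square p q x3 x4
    have hk1' : k = 1 := by omega
    rw [hk1'] at hk
    have hqx3 : G.Adj q x3 := SimpleGraph.dist_eq_one_iff_adj.mp (by rw [hdqx3, hk1'])
    have hx4p : G.Adj x4 p := (SimpleGraph.dist_eq_one_iff_adj.mp hk).symm
    refine ⟨p, q, x3, x4, hpS, hqS, hx3S, hx4S, hpq, hqx3, hx43.symm, hx4p, ?_, ?_, ?_, ?_, ?_, ?_⟩
    · intro h; rw [h] at hpW1; exact hx3W1 hpW1
    · intro h; rw [h] at hqW2; exact hqW2 hx4W2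
    · exact mem_theta_of_cross hmed hab hpq hpW1 hqW1
    · exact mem_theta_of_cross hmed hab hx43 hx4W1 hx3W1
    · rw [show s(p, x4) = s(x4, p) from Sym2.eq_swap]
      exact mem_theta_of_cross hmed huv hx4p hx4W2 hpW2
    · rw [show s(q, x3) = s(x3, q) from Sym2.eq_swap]
      exact mem_theta_of_cross hmed huv hqx3.symm hx3W2 hqW2
  · -- step case : take a neighbour c of p towards x4
    obtain ⟨r, hr⟩ := hc.exists_walk_length_eq_dist p x4
    rw [hk] at hr
    set cc : ℕ → V := fun j => r.getVert j with hccdef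
    have hchain : ∀ i < k, G.Adj (cc i) (cc (i + 1)) := by
      intro i hi; exact r.adj_getVert_succ (by omega)
    have hcc0 : cc 0 = p := r.getVert_zero
    have hcck : cc k = x4 := by
      have := r.getVert_length; rwa [hr] at this
    have hgeo : G.dist (cc 0) (cc k) = k := by rw [hcc0, hcck, hk]
    set c := cc 1 with hcdef
    have hpc : G.Adj p c := by
      have := hchain 0 (by omega)
      rwa [hcc0] at this
    have hdc4 : G.dist c x4 = k - 1 := by
      have := chain_geo hc hchain hgeo 1 k (by omega) le_rfl
      rwa [hcck] at this
    have hdpc : G.dist p c = 1 := SimpleGraph.dist_eq_one_iff_adj.mpr hpc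
    have hbetc : G.dist p c + G.dist c x4 = G.dist p x4 := by omega
    have hcW1 : c ∈ sideW G a b := side_convex hmed hab hpW1 hx4W1 hbetc
    have hcS : c ∈ S := convex_between hc hS hpS hx4S hbetc
    -- q and c are at distance 2
    have hdqc : G.dist q c = 2 := by
      have hne : G.dist q c ≠ 0 := by
        intro h0
        have : q = c := hc.dist_eq_zero_iff.mp h0
        rw [this] at hqW1; exact hqW1 hcW1
      have hne1 : G.dist q c ≠ 1 := by
        intro h1
        have hadj : G.Adj q c := SimpleGraph.dist_eq_one_iff_adj.mp h1
        have := not_equidist hmed hadj p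
        rw [SimpleGraph.dist_comm (u := q) (v := p), SimpleGraph.dist_comm (u := c) (v := p)] at this
        omega
      have hle : G.dist q c ≤ 2 := by
        have t := hc.dist_triangle (u := q) (v := p) (w := c)
        rw [SimpleGraph.dist_comm (u := q) (v := p)] at t
        omega
      omega
    -- the fourth corner t
    obtain ⟨t, h1, h2, h3⟩ := med hmed q c x3
    rw [hdqc] at h1
    have htq : G.dist q t ≠ 0 := by
      intro h0
      have htq' : q = t := hc.dist_eq_zero_iff.mp h0
      by_cases hcW2 : c ∈ sideW G u v
      · -- q between c and x3 in sideW u v : contradiction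
        apply hqW2
        rw [← htq'] at h3
        exact side_convex hmed huv hcW2 hx3W2 h3
      · -- distance contradiction : d c x3 ≤ k but = k + 2
        rw [← htq'] at h3
        have ht3 : G.dist c x3 ≤ k := by
          have t1 := hc.dist_triangle (u := c) (v := x4) (w := x3)
          omega
        have e1 : G.dist c q = G.dist q c := SimpleGraph.dist_comm
        omega
    have htc : G.dist t c ≠ 0 := by
      intro h0
      have htc' : t = c := hc.dist_eq_zero_iff.mp h0
      rw [htc'] at h2
      apply (side_flip hmed hab c).mpr ?_ hcW1
      exact side_convex hmed hab.symm hqW1' hx3W1' h2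
    have hdqt : G.dist q t = 1 := by omega
    have hdtc : G.dist t c = 1 := by omega
    have hqt : G.Adj q t := SimpleGraph.dist_eq_one_iff_adj.mp hdqt
    have htcadj : G.Adj t c := SimpleGraph.dist_eq_one_iff_adj.mp hdtc
    have htW1 : t ∉ sideW G a b := by
      rw [side_flip hmed hab]
      exact side_convex hmed hab.symm hqW1' hx3W1' h2
    have htS : t ∈ S := convex_between hc hS hqS hcS (by omega)
    by_cases hcW2 : c ∈ sideW G u v
    · -- direct square p q t c
      have htW2 : t ∈ sideW G u v := side_convex hmed huv hcW2 hx3W2 h3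
      refine ⟨p, q, t, c, hpS, hqS, htS, hcS, hpq, hqt, htcadj, hpc.symm, ?_, ?_, ?_, ?_, ?_, ?_⟩
      · intro h; rw [h] at hpW1; exact htW1 hpW1
      · intro h; rw [h] at hqW2; exact hqW2 hcW2
      · exact mem_theta_of_cross hmed hab hpq hpW1 hqW1
      · exact mem_theta_of_cross hmed hab htcadj.symm hcW1 htW1
      · rw [show s(p, c) = s(c, p) from Sym2.eq_swap]
        exact mem_theta_of_cross hmed huv hpc.symm hcW2 hpW2
      · rw [show s(q, t) = s(t, q) from Sym2.eq_swap]
        exact mem_theta_of_cross hmed huv hqt.symm htW2 hqW2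
    · -- recurse with the edge c t
      have htW2 : t ∉ sideW G u v := by
        intro htW2
        obtain ⟨m2, g1, g2, g3⟩ := med hmed c t x4
        have hdct : G.dist c t = 1 := by
          rw [SimpleGraph.dist_comm]; exact hdtc
        rw [hdct] at g1
        rcases Nat.add_eq_one_iff.mp g1 with ⟨ga, gb⟩ | ⟨ga, gb⟩
        · -- m2 = c : c between t and x4 in sideW u v
          have hmc : c = m2 := hc.dist_eq_zero_iff.mp ga
          rw [← hmc] at g3
          apply hcW2
          exact side_convex hmed huv htW2 hx4W2 g3
        · -- m2 = t : t between c and x4 in sideW a b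
          have hmt : m2 = t := hc.dist_eq_zero_iff.mp gb
          rw [hmt] at g2
          exact htW1 (side_convex hmed hab hcW1 hx4W1 g2)
      exact ih (k - 1) (by omega) c t x4 x3 hdc4 hcS htS hx4S hx3S htcadj.symm hx43
        hcW1 htW1 hx4W1 hx3W1 hcW2 htW2 hx4W2 hx3W2


lemma side_asymm {a b z : V} (h : z ∈ sideW G a b) : z ∉ sideW G b a := by
  intro h'
  simp only [sideW, Set.mem_setOf_eq] at h h'
  omega

/-- an edge cannot cross two crossing cuts simultaneously -/
lemma not_cross_both (hmed : IsMedianGraph G) {a b u v x y r : V}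
    (hab : G.Adj a b) (huv : G.Adj u v) (hxy : G.Adj x y)
    (hx1 : x ∈ sideW G a b) (hy1 : y ∉ sideW G a b)
    (hx2 : x ∈ sideW G u v) (hy2 : y ∉ sideW G u v)
    (hr1 : r ∈ sideW G a b) (hr2 : r ∉ sideW G u v) : False := by
  have hc := hmed.1
  obtain ⟨m, h1, h2, h3⟩ := med hmed x y r
  rw [SimpleGraph.dist_eq_one_iff_adj.mpr hxy] at h1
  rcases Nat.add_eq_one_iff.mp h1 with ⟨ha', hb'⟩ | ⟨ha', hb'⟩
  · -- m = x : x between y and r, both outside sideW u v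
    have hmx : x = m := hc.dist_eq_zero_iff.mp ha'
    rw [← hmx] at h3
    have : x ∈ sideW G v u :=
      side_convex hmed huv.symm ((side_flip hmed huv y).mp hy2)
        ((side_flip hmed huv r).mp hr2) h3
    exact side_asymm hx2 this
  · -- m = y : y between x and r, both inside sideW a b
    have hmy : m = y := hc.dist_eq_zero_iff.mp hb'
    rw [hmy] at h2
    exact hy1 (side_convex hmed hab hx1 hr1 h2)

/-- oriented main construction -/
lemma semifinal (hmed : IsMedianGraph G) {S : Set V} (hS : ConvexSet G S)
    {a b u v : V} (hab : G.Adj a b) (huv : G.Adj u v)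
    {p q r s z1 z2 : V}
    (hpS : p ∈ S) (hqS : q ∈ S) (hrS : r ∈ S) (hsS : s ∈ S)
    (hpq : G.Adj p q) (hrs : G.Adj r s)
    (hpW1 : p ∈ sideW G a b) (hqW1 : q ∉ sideW G a b)
    (hpW2 : p ∉ sideW G u v) (hqW2 : q ∉ sideW G u v)
    (hrW2 : r ∈ sideW G u v) (hsW2 : s ∉ sideW G u v)
    (hz1a : z1 ∈ sideW G a b) (hz1u : z1 ∈ sideW G u v)
    (hz2a : z2 ∉ sideW G a b) (hz2u : z2 ∈ sideW G u v) :
    ∃ w1 w2 w3 w4 : V, w1 ∈ S ∧ w2 ∈ S ∧ w3 ∈ S ∧ w4 ∈ S ∧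
      AltFourCycle G (thetaClassOf G s(a, b)) (thetaClassOf G s(u, v)) w1 w2 w3 w4 := by
  have hc := hmed.1
  -- w2 : a vertex of S in sideW a b ∩ sideW u v
  obtain ⟨w2, g1, g2, g3⟩ := med hmed p r z1
  have hw2S : w2 ∈ S := convex_between hc hS hpS hrS g1
  have hw2a : w2 ∈ sideW G a b := side_convex hmed hab hpW1 hz1a g2
  have hw2u : w2 ∈ sideW G u v := side_convex hmed huv hrW2 hz1u (by
    have e : G.dist r w2 = G.dist w2 r := SimpleGraph.dist_comm
    omega)
  -- w3 : a vertex of S in (sideW b a) ∩ sideW u v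
  obtain ⟨w3, f1, f2, f3⟩ := med hmed q r z2
  have hw3S : w3 ∈ S := convex_between hc hS hqS hrS f1
  have hw3a : w3 ∉ sideW G a b := by
    have : w3 ∈ sideW G b a :=
      side_convex hmed hab.symm ((side_flip hmed hab q).mp hqW1)
        ((side_flip hmed hab z2).mp hz2a) f2
    exact side_asymm this
  have hw3u : w3 ∈ sideW G u v := side_convex hmed huv hrW2 hz2u (by
    have e : G.dist r w3 = G.dist w3 r := SimpleGraph.dist_comm
    omega)
  -- find a cut-1 edge inside S ∩ sideW u v
  obtain ⟨x4, x3, hx43, hx4a, hx3a, hx4m, hx3m⟩ :=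
    exists_cross_edge (T := sideW G a b) (U := S ∩ sideW G u v) hc hw2a hw3a
      (fun z hz => ⟨convex_between hc hS hw2S hw3S hz, side_convex hmed huv hw2u hw3u hz⟩)
  exact main_ind hmed hS hab huv (G.dist p x4) p q x4 x3 rfl hpS hqS hx4m.1 hx3m.1
    hpq hx43 hpW1 hqW1 hx4a hx3a hpW2 hqW2 hx4m.2 hx3m.2


end MedAux

open MedAux

/-- Let `G` be a finite median graph, `S` (the vertex set of) a convex
subgraph, and `θ₁, θ₂` two crossing Θ-classes. If both occur in `S`, then they cross in `S`,
i.e. `S` contains a `θ₁,θ₂`-alternating 4-cycle. -/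
theorem crosses_in_convex_subgraph {V : Type*} [Finite V] (G : SimpleGraph V)
    (hmed : IsMedianGraph G) (S : Set V) (hconv : ConvexSet G S)
    (θ₁ θ₂ : Set (Sym2 V)) (h₁ : IsThetaClass G θ₁) (h₂ : IsThetaClass G θ₂)
    (hcross : Crosses G θ₁ θ₂) (ho₁ : OccursIn G θ₁ S) (ho₂ : OccursIn G θ₂ S) :
    ∃ u v w x : V, u ∈ S ∧ v ∈ S ∧ w ∈ S ∧ x ∈ S ∧ AltFourCycle G θ₁ θ₂ u v w x := by
  classical
  obtain ⟨a, b, u, v, hab, huv, hθ₁, hθ₂, ⟨z1, hz1a, hz1u⟩, ⟨z2, hz2b, hz2u⟩,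
    ⟨z3, hz3a, hz3v⟩, ⟨z4, hz4b, hz4v⟩⟩ := hcross
  subst hθ₁; subst hθ₂
  -- orient the θ₁-edge of S
  obtain ⟨p0, q0, hpq0, hp0S, hq0S, hpq0θ⟩ := ho₁
  obtain ⟨p, q, hpq, hpS, hqS, hpW1, hqW1⟩ :
      ∃ p q : V, G.Adj p q ∧ p ∈ S ∧ q ∈ S ∧ p ∈ sideW G a b ∧ q ∉ sideW G a b := by
    rcases cross_of_mem_theta hmed hab hpq0 hpq0θ with ⟨h1, h2⟩ | ⟨h1, h2⟩
    · exact ⟨p0, q0, hpq0, hp0S, hq0S, h1, h2⟩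
    · exact ⟨q0, p0, hpq0.symm, hq0S, hp0S, h1, h2⟩
  -- orient the θ₂-edge of S
  obtain ⟨r0, s0, hrs0, hr0S, hs0S, hrs0θ⟩ := ho₂
  obtain ⟨r, s, hrs, hrS, hsS, hrW2, hsW2⟩ :
      ∃ r s : V, G.Adj r s ∧ r ∈ S ∧ s ∈ S ∧ r ∈ sideW G u v ∧ s ∉ sideW G u v := by
    rcases cross_of_mem_theta hmed huv hrs0 hrs0θ with ⟨h1, h2⟩ | ⟨h1, h2⟩
    · exact ⟨r0, s0, hrs0, hr0S, hs0S, h1, h2⟩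
    · exact ⟨s0, r0, hrs0.symm, hs0S, hr0S, h1, h2⟩
  by_cases hpW2 : p ∈ sideW G u v
  · -- p, q both inside sideW u v ; work with the flipped second cut (v, u)
    have hqW2 : q ∈ sideW G u v := by
      by_contra hqW2
      exact not_cross_both hmed hab huv hpq hpW1 hqW1 hpW2 hqW2 hz3a
        ((side_flip hmed huv z3).mpr hz3v)
    have hswap : thetaClassOf G s(u, v) = thetaClassOf G s(v, u) := by
      rw [Sym2.eq_swap]
    rw [hswap]
    obtain ⟨w1, w2, w3, w4, h1, h2, h3, h4, h5⟩ :=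
      semifinal hmed hconv hab huv.symm hpS hqS hsS hrS hpq hrs.symm hpW1 hqW1
        (side_asymm hpW2) (side_asymm hqW2)
        ((side_flip hmed huv s).mp hsW2) (side_asymm hrW2)
        hz3a hz3v ((side_flip hmed hab z4).mpr hz4b) hz4v
    exact ⟨w1, w2, w3, w4, h1, h2, h3, h4, h5⟩
  · -- p, q both outside sideW u v
    have hqW2 : q ∉ sideW G u v := by
      intro hqW2
      exact not_cross_both hmed hab.symm huv hpq.symm
        ((side_flip hmed hab q).mp hqW1) (side_asymm hpW1) hqW2 hpW2 hz4b
        ((side_flip hmed huv z4).mpr hz4v)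
    obtain ⟨w1, w2, w3, w4, h1, h2, h3, h4, h5⟩ :=
      semifinal hmed hconv hab huv hpS hqS hrS hsS hpq hrs hpW1 hqW1 hpW2 hqW2
        hrW2 hsW2 hz1a hz1u ((side_flip hmed hab z2).mpr hz2b) hz2u
    exact ⟨w1, w2, w3, w4, h1, h2, h3, h4, h5⟩
end

section
/- Let n ≥ 1 and m ≥ 0 be integers and let G be the graph obtained from the hypercube Q_n by attaching m pendant vertices (each new vertex joined by a single edge to some vertex of Q_n). Then G is a median graph and C(G,x) = (x+2)^n + m·(x+1). Moreover, if n ≥ 9 and m ≥ ((n² − 5n)/2)·2^(n−2) + 1, then C(G,x) is not unimodal; hence cube polynomials of median graphs need not be unimodal. -/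
open SimpleGraph Polynomial

/-- The graph obtained from `G` by attaching `m` pendant vertices, the `j`-th pendant being
joined by a single edge to the vertex `f j` of `G`. -/
def withPendants {V : Type*} (G : SimpleGraph V) (m : ℕ) (f : Fin m → V) :
    SimpleGraph (V ⊕ Fin m) where
  Adj x y := match x, y with
    | Sum.inl u, Sum.inl v => G.Adj u v
    | Sum.inl u, Sum.inr j => u = f j
    | Sum.inr j, Sum.inl v => f j = v
    | Sum.inr _, Sum.inr _ => False
  symm := by
    refine ⟨?_⟩
    rintro (u | i) (v | j) h
    · exact h.symm
    · exact h.symm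
    · exact h.symm
    · exact h
  loopless := by
    refine ⟨?_⟩
    rintro (u | i) h
    · exact G.irrefl h
    · exact h

namespace HCAux

variable {n : ℕ}

local notation "hD" => hammingDist

lemma hD_eq_sum (x y : Fin n → Bool) :
    hD x y = ∑ i, (if x i ≠ y i then 1 else 0) := by
  rw [hammingDist, Finset.card_filter]

lemma between_iff {u v t : Fin n → Bool} :
    hD u t + hD t v = hD u v ↔ ∀ i, u i = v i → t i = u i := by
  rw [hD_eq_sum, hD_eq_sum, hD_eq_sum, ← Finset.sum_add_distrib]
  have hle : ∀ i : Fin n, i ∈ Finset.univ →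
      (if u i ≠ v i then (1:ℕ) else 0) ≤
        ((if u i ≠ t i then 1 else 0) + if t i ≠ v i then 1 else 0) := by
    intro i _
    rcases Bool.eq_false_or_eq_true (u i) with h1 | h1 <;>
      rcases Bool.eq_false_or_eq_true (t i) with h2 | h2 <;>
      rcases Bool.eq_false_or_eq_true (v i) with h3 | h3 <;> simp [h1, h2, h3]
  rw [eq_comm, Finset.sum_eq_sum_iff_of_le hle]
  constructor
  · intro h i hi
    have := h i (Finset.mem_univ i)
    revert this hi
    rcases Bool.eq_false_or_eq_true (u i) with h1 | h1 <;>
      rcases Bool.eq_false_or_eq_true (t i) with h2 | h2 <;>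
      rcases Bool.eq_false_or_eq_true (v i) with h3 | h3 <;> simp [h1, h2, h3]
  · intro h i _
    have := h i
    revert this
    rcases Bool.eq_false_or_eq_true (u i) with h1 | h1 <;>
      rcases Bool.eq_false_or_eq_true (t i) with h2 | h2 <;>
      rcases Bool.eq_false_or_eq_true (v i) with h3 | h3 <;> simp [h1, h2, h3]

/-- majority of three booleans -/
def maj (a b c : Bool) : Bool := (a && b) || (a && c) || (b && c)

lemma maj_spec (u v w : Fin n → Bool) (i : Fin n) :
    (u i = v i → maj (u i) (v i) (w i) = u i) ∧
    (u i = w i → maj (u i) (v i) (w i) = u i) ∧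
    (v i = w i → maj (u i) (v i) (w i) = v i) := by
  rcases Bool.eq_false_or_eq_true (u i) with h1 | h1 <;>
    rcases Bool.eq_false_or_eq_true (v i) with h2 | h2 <;>
    rcases Bool.eq_false_or_eq_true (w i) with h3 | h3 <;> simp [maj, h1, h2, h3]

lemma cube_median (u v w : Fin n → Bool) :
    ∃! t : Fin n → Bool,
      (hD u t + hD t v = hD u v) ∧ (hD u t + hD t w = hD u w) ∧
        (hD v t + hD t w = hD v w) := by
  refine ⟨fun i => maj (u i) (v i) (w i), ⟨?_, ?_, ?_⟩, ?_⟩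
  · exact between_iff.2 fun i hi => (maj_spec u v w i).1 hi
  · exact between_iff.2 fun i hi => (maj_spec u v w i).2.1 hi
  · rw [between_iff]
    intro i hi
    exact (maj_spec u v w i).2.2 hi
  · intro t ⟨h1, h2, h3⟩
    rw [between_iff] at h1 h2 h3
    funext i
    have m1 := (maj_spec u v w i).1
    have m2 := (maj_spec u v w i).2.1
    have m3 := (maj_spec u v w i).2.2
    have t1 := h1 i; have t2 := h2 i; have t3 := h3 i
    rcases Bool.eq_false_or_eq_true (u i) with g1 | g1 <;>
      rcases Bool.eq_false_or_eq_true (v i) with g2 | g2 <;>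
      rcases Bool.eq_false_or_eq_true (w i) with g3 | g3 <;>
      simp_all [maj]

lemma adj_update {u : Fin n → Bool} {i : Fin n} {b : Bool} (h : u i ≠ b) :
    (hypercube n).Adj u (Function.update u i b) := by
  refine ⟨i, by simp only [Function.update_self]; exact h, ?_⟩
  intro j hj
  by_contra hne
  exact hj (by rw [Function.update_of_ne hne])

lemma adj_comm' {u v : Fin n → Bool} (h : (hypercube n).Adj u v) :
    (hypercube n).Adj v u := h.symm

lemma hD_update {u v : Fin n → Bool} {i : Fin n} (h : u i ≠ v i) :
    hD (Function.update u i (v i)) v = hD u v - 1 := by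
  have hset : ({j | Function.update u i (v i) j ≠ v j} : Finset (Fin n))
      = ({j | u j ≠ v j} : Finset (Fin n)).erase i := by
    ext j
    by_cases hj : j = i
    · subst hj; simp [Function.update_self]
    · simp [Finset.mem_erase, hj, Function.update_of_ne hj]
  rw [hammingDist, hset, Finset.card_erase_of_mem (by simpa using h)]
  rfl

lemma exists_cube_walk (u v : Fin n → Bool) :
    ∃ p : (hypercube n).Walk u v, p.length = hD u v := by
  generalize hd : hD u v = d
  induction d generalizing u with
  | zero =>
    have : u = v := hammingDist_eq_zero.1 hd
    subst this; exact ⟨SimpleGraph.Walk.nil, rfl⟩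
  | succ d ih =>
    have hne : u ≠ v := by
      intro h; subst h; simp [hammingDist_self] at hd
    have : ∃ i, u i ≠ v i := by
      by_contra h; push_neg at h; exact hne (funext h)
    obtain ⟨i, hi⟩ := this
    set u' := Function.update u i (v i) with hu'
    have hadj : (hypercube n).Adj u u' := adj_update (by simpa using hi)
    have hd' : hD u' v = d := by
      rw [hu', hD_update hi, hd]
      omega
    obtain ⟨p, hp⟩ := ih u' hd'
    exact ⟨SimpleGraph.Walk.cons hadj p, by simp [hp]⟩

end HCAux

namespace HCAux

variable {n m : ℕ}

local notation "hD" => hammingDist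

lemma adj_iff_hD {u v : Fin n → Bool} : (hypercube n).Adj u v ↔ hD u v = 1 := by
  constructor
  · rintro ⟨i, hi, hu⟩
    have : ({j | u j ≠ v j} : Finset (Fin n)) = {i} := by
      ext j
      simp only [Finset.mem_filter, Finset.mem_univ, true_and, Finset.mem_singleton]
      constructor
      · exact fun h => hu j h
      · rintro rfl; exact hi
    rw [hammingDist, this, Finset.card_singleton]
  · intro h
    obtain ⟨i, hi⟩ := Finset.card_eq_one.1 h
    have hmem : ∀ j, u j ≠ v j ↔ j = i := by
      intro j
      constructor
      · intro hj
        have : j ∈ ({i} : Finset (Fin n)) := hi ▸ (by simpa using hj)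
        simpa using this
      · rintro rfl
        have : j ∈ ({j' | u j' ≠ v j'} : Finset (Fin n)) := by
          rw [hi]; exact Finset.mem_singleton_self j
        simpa using this
    exact ⟨i, (hmem i).2 rfl, fun j hj => (hmem j).1 hj⟩

variable (f : Fin m → (Fin n → Bool))

/-- projection to the cube -/
def pd : (Fin n → Bool) ⊕ Fin m → (Fin n → Bool) := Sum.elim id f

/-- 1 on pendant vertices -/
def wt : (Fin n → Bool) ⊕ Fin m → ℕ := Sum.elim (fun _ => 0) (fun _ => 1)

/-- the distance function on the pendant graph -/
def DD (x y : (Fin n → Bool) ⊕ Fin m) : ℕ :=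
  if x = y then 0 else hD (pd f x) (pd f y) + wt x + wt y

lemma DD_self (x) : DD f x x = 0 := by simp [DD]

lemma DD_comm (x y) : DD f x y = DD f y x := by
  unfold DD
  by_cases h : x = y
  · simp [h]
  · rw [if_neg h, if_neg (Ne.symm h), hammingDist_comm]
    ring

lemma DD_ne {x y} (h : x ≠ y) : DD f x y = hD (pd f x) (pd f y) + wt x + wt y := by
  simp [DD, h]

lemma DD_eq_zero {x y} (h : DD f x y = 0) : x = y := by
  by_contra hne
  rw [DD_ne f hne] at h
  have h1 : hD (pd f x) (pd f y) = 0 := by omega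
  have h2 : wt x = 0 := by omega
  have h3 : wt y = 0 := by omega
  rcases x with u | j
  · rcases y with v | k
    · have : u = v := hammingDist_eq_zero.1 h1
      exact hne (by rw [this])
    · simp [wt] at h3
  · simp [wt] at h2

lemma DD_inl_right (x) (t : Fin n → Bool) :
    DD f x (Sum.inl t) = hD (pd f x) t + wt x := by
  by_cases h : x = Sum.inl t
  · subst h; simp [DD, pd, wt]
  · rw [DD_ne f h]; simp [wt, pd]

lemma DD_inl_left (t : Fin n → Bool) (x) :
    DD f (Sum.inl t) x = hD t (pd f x) + wt x := by
  rw [DD_comm, DD_inl_right, hammingDist_comm]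

lemma DD_inl_inl (u v : Fin n → Bool) : DD f (Sum.inl u) (Sum.inl v) = hD u v := by
  rw [DD_inl_right]; simp [pd, wt]

lemma DD_triangle (x y z) : DD f x z ≤ DD f x y + DD f y z := by
  by_cases hxz : x = z
  · subst hxz; simp [DD_self]
  by_cases hxy : x = y
  · subst hxy; simp [DD_self]
  by_cases hyz : y = z
  · subst hyz; simp [DD_self]
  rw [DD_ne f hxz, DD_ne f hxy, DD_ne f hyz]
  have := hammingDist_triangle (pd f x) (pd f y) (pd f z)
  omega

lemma DD_adj_le {x z} (h : (withPendants (hypercube n) m f).Adj x z) : DD f x z ≤ 1 := by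
  rcases x with u | j <;> rcases z with v | k
  · have hadj : (hypercube n).Adj u v := h
    have h1 : hD u v = 1 := adj_iff_hD.1 hadj
    rw [DD_inl_inl, h1]
  · have : u = f k := h
    have hne : (Sum.inl u : (Fin n → Bool) ⊕ Fin m) ≠ Sum.inr k := by simp
    rw [DD_ne f hne, this]
    simp [pd, wt, hammingDist_self]
  · have : f j = v := h
    have hne : (Sum.inr j : (Fin n → Bool) ⊕ Fin m) ≠ Sum.inl v := by simp
    rw [DD_ne f hne, ← this]
    simp [pd, wt, hammingDist_self]
  · exact absurd h (by simp [withPendants])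

/-- `Sum.inl` as a graph homomorphism from the cube. -/
def inlHom : hypercube n →g withPendants (hypercube n) m f where
  toFun := Sum.inl
  map_rel' := fun h => h

lemma exists_walk_DD (x y : (Fin n → Bool) ⊕ Fin m) :
    ∃ p : (withPendants (hypercube n) m f).Walk x y, p.length = DD f x y := by
  have cube : ∀ u v : Fin n → Bool,
      ∃ p : (withPendants (hypercube n) m f).Walk (Sum.inl u) (Sum.inl v),
        p.length = hD u v := by
    intro u v
    obtain ⟨p, hp⟩ := exists_cube_walk u v
    exact ⟨p.map (inlHom f), (SimpleGraph.Walk.length_map _ _).trans hp⟩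
  rcases x with u | j <;> rcases y with v | k
  · obtain ⟨p, hp⟩ := cube u v
    exact ⟨p, by rw [hp, DD_inl_inl]⟩
  · obtain ⟨p, hp⟩ := cube u (f k)
    have hadj : (withPendants (hypercube n) m f).Adj (Sum.inl (f k)) (Sum.inr k) := rfl
    refine ⟨p.concat hadj, ?_⟩
    rw [SimpleGraph.Walk.length_concat, hp]
    rw [DD_ne f (by simp)]
    simp [pd, wt]
  · obtain ⟨p, hp⟩ := cube (f j) v
    have hadj : (withPendants (hypercube n) m f).Adj (Sum.inr j) (Sum.inl (f j)) := rfl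
    refine ⟨SimpleGraph.Walk.cons hadj p, ?_⟩
    rw [SimpleGraph.Walk.length_cons, hp, DD_ne f (by simp)]
    simp [pd, wt]
  · by_cases hjk : j = k
    · subst hjk
      exact ⟨SimpleGraph.Walk.nil, by simp [DD_self]⟩
    · obtain ⟨p, hp⟩ := cube (f j) (f k)
      have hadj1 : (withPendants (hypercube n) m f).Adj (Sum.inr j) (Sum.inl (f j)) := rfl
      have hadj2 : (withPendants (hypercube n) m f).Adj (Sum.inl (f k)) (Sum.inr k) := rfl
      refine ⟨SimpleGraph.Walk.cons hadj1 (p.concat hadj2), ?_⟩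
      rw [SimpleGraph.Walk.length_cons, SimpleGraph.Walk.length_concat, hp]
      rw [DD_ne f (by simp [hjk])]
      simp [pd, wt]

lemma connected_withPendants : (withPendants (hypercube n) m f).Connected := by
  have : Nonempty ((Fin n → Bool) ⊕ Fin m) := ⟨Sum.inl (fun _ => false)⟩
  exact SimpleGraph.Connected.mk fun x y => ⟨(exists_walk_DD f x y).choose⟩

lemma DD_le_length {x y} (p : (withPendants (hypercube n) m f).Walk x y) :
    DD f x y ≤ p.length := by
  induction p with
  | nil => simp [DD_self]
  | @cons a b c h p ih =>
    have h1 := DD_triangle f a b c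
    have h2 := DD_adj_le f h
    have h3 : (SimpleGraph.Walk.cons h p).length = p.length + 1 := by simp
    omega

lemma dist_eq (x y : (Fin n → Bool) ⊕ Fin m) :
    (withPendants (hypercube n) m f).dist x y = DD f x y := by
  apply le_antisymm
  · obtain ⟨p, hp⟩ := exists_walk_DD f x y
    exact hp ▸ SimpleGraph.dist_le p
  · obtain ⟨p, hp⟩ :=
      ((connected_withPendants f) x y).exists_walk_length_eq_dist
    exact hp ▸ DD_le_length f p

end HCAux

namespace HCAux

variable {n m : ℕ} (f : Fin m → (Fin n → Bool))

local notation "hD" => hammingDist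

lemma DD_between_iff {a b : (Fin n → Bool) ⊕ Fin m} (t : Fin n → Bool) (hab : a ≠ b) :
    DD f a (Sum.inl t) + DD f (Sum.inl t) b = DD f a b ↔
      ∀ i, pd f a i = pd f b i → t i = pd f a i := by
  rw [DD_inl_right, DD_inl_left, DD_ne f hab]
  constructor
  · intro h
    exact between_iff.1 (by omega)
  · intro h
    have := between_iff.2 h
    omega

lemma pend_contra {a b : (Fin n → Bool) ⊕ Fin m} (l : Fin m) (hab : a ≠ b)
    (ha : a ≠ Sum.inr l) (hb : b ≠ Sum.inr l) :
    DD f a (Sum.inr l) + DD f (Sum.inr l) b ≠ DD f a b := by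
  rw [DD_ne f ha, DD_ne f (Ne.symm hb), DD_ne f hab]
  have := hammingDist_triangle (pd f a) (pd f (Sum.inr l)) (pd f b)
  have hw : wt (Sum.inr l : (Fin n → Bool) ⊕ Fin m) = 1 := rfl
  omega

lemma median_withPendants : IsMedianGraph (withPendants (hypercube n) m f) := by
  refine ⟨connected_withPendants f, ?_⟩
  intro u v w
  simp only [dist_eq f]
  by_cases huv : u = v
  · subst huv
    refine ⟨u, ⟨by simp [DD_self], by simp [DD_self], by simp [DD_self]⟩, ?_⟩
    rintro x ⟨h1, -, -⟩
    rw [DD_self] at h1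
    have hc := DD_comm f x u
    have : DD f u x = 0 := by omega
    exact (DD_eq_zero f this).symm
  by_cases huw : u = w
  · subst huw
    refine ⟨u, ⟨by simp [DD_self], by simp [DD_self], by simp [DD_self, DD_comm f v u]⟩, ?_⟩
    rintro x ⟨-, h2, -⟩
    rw [DD_self] at h2
    have hc := DD_comm f x u
    have : DD f u x = 0 := by omega
    exact (DD_eq_zero f this).symm
  by_cases hvw : v = w
  · subst hvw
    refine ⟨v, ⟨by simp [DD_self], by simp [DD_self], by simp [DD_self]⟩, ?_⟩
    rintro x ⟨-, -, h3⟩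
    rw [DD_self] at h3
    have hc := DD_comm f x v
    have : DD f v x = 0 := by omega
    exact (DD_eq_zero f this).symm
  · refine ⟨Sum.inl (fun i => maj (pd f u i) (pd f v i) (pd f w i)), ⟨?_, ?_, ?_⟩, ?_⟩
    · exact (DD_between_iff f _ huv).2 fun i hi => (maj_spec (pd f u) (pd f v) (pd f w) i).1 hi
    · exact (DD_between_iff f _ huw).2 fun i hi => (maj_spec (pd f u) (pd f v) (pd f w) i).2.1 hi
    · exact (DD_between_iff f _ hvw).2 fun i hi => (maj_spec (pd f u) (pd f v) (pd f w) i).2.2 hi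
    · rintro x ⟨h1, h2, h3⟩
      rcases x with t | l
      · have b1 := (DD_between_iff f t huv).1 h1
        have b2 := (DD_between_iff f t huw).1 h2
        have b3 := (DD_between_iff f t hvw).1 h3
        have ht : t = fun i => maj (pd f u i) (pd f v i) (pd f w i) := by
          funext i
          have c1 := b1 i; have c2 := b2 i; have c3 := b3 i
          rcases Bool.eq_false_or_eq_true (pd f u i) with g1 | g1 <;>
            rcases Bool.eq_false_or_eq_true (pd f v i) with g2 | g2 <;>
            rcases Bool.eq_false_or_eq_true (pd f w i) with g3 | g3 <;>
            simp_all [maj]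
        exact congrArg Sum.inl ht
      · exfalso
        by_cases hu : Sum.inr l = u
        · subst hu
          exact pend_contra f l hvw (Ne.symm huv) (Ne.symm huw) h3
        by_cases hv : Sum.inr l = v
        · subst hv
          exact pend_contra f l huw huv (Ne.symm hvw) h2
        by_cases hw : Sum.inr l = w
        · subst hw
          exact pend_contra f l huv huw hvw h1
        · exact pend_contra f l huv (Ne.symm hu) (Ne.symm hv) h1

end HCAux

namespace HCAux

variable {n i : ℕ}

/-- the standard basis vector -/
def unitv (k : Fin i) : Fin i → Bool := Function.update (fun _ => false) k true

/-- weight of a 0-1 vector -/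
def wtv (x : Fin i → Bool) : ℕ := (Finset.univ.filter (fun k => x k = true)).card

lemma wtv_eq_zero {x : Fin i → Bool} (h : wtv x = 0) : x = fun _ => false := by
  rw [wtv, Finset.card_eq_zero] at h
  funext k
  by_contra hk
  have : k ∈ (Finset.univ.filter (fun k => x k = true)) := by
    simp only [Finset.mem_filter, Finset.mem_univ, true_and]
    simp only [ne_eq, Bool.not_eq_false] at hk ⊢
    exact hk
  rw [h] at this
  exact absurd this (Finset.notMem_empty k)

lemma wtv_eq_one {x : Fin i → Bool} (h : wtv x = 1) : ∃ k, x = unitv k := by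
  rw [wtv, Finset.card_eq_one] at h
  obtain ⟨k, hk⟩ := h
  refine ⟨k, funext fun j => ?_⟩
  have hmem : ∀ j', x j' = true ↔ j' = k := by
    intro j'
    constructor
    · intro hj
      have : j' ∈ (Finset.univ.filter (fun k => x k = true)) := by simp [hj]
      rw [hk] at this; simpa using this
    · rintro rfl
      have : j' ∈ ({j'} : Finset (Fin i)) := Finset.mem_singleton_self j'
      rw [← hk] at this; simpa using this
  by_cases hj : j = k
  · subst hj
    simp [unitv, (hmem j).2 rfl]
  · rw [unitv, Function.update_of_ne hj]
    rcases Bool.eq_false_or_eq_true (x j) with h' | h'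
    · exact absurd ((hmem j).1 h') hj
    · exact h'


lemma wtv_update_false {x : Fin i → Bool} {k : Fin i} (h : x k = true) :
    wtv (Function.update x k false) = wtv x - 1 := by
  have hset : (Finset.univ.filter (fun j => Function.update x k false j = true))
      = (Finset.univ.filter (fun j => x j = true)).erase k := by
    ext j
    by_cases hj : j = k
    · subst hj; simp [Function.update_self]
    · simp [Finset.mem_erase, hj, Function.update_of_ne hj]
  rw [wtv, hset, Finset.card_erase_of_mem (by simp [h])]
  rfl

lemma unitv_self (k : Fin i) : unitv k k = true := by simp [unitv]

lemma unitv_ne {k j : Fin i} (h : j ≠ k) : unitv k j = false := by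
  rw [unitv, Function.update_of_ne h]

lemma adj_unitv (k : Fin i) : (hypercube i).Adj (fun _ => false) (unitv k) :=
  adj_update (by simp)

/-- `cubeSet A b` : the subcube with free coordinates `A` and base values `b`. -/
def cubeSet (A : Finset (Fin n)) (b : Fin n → Bool) : Set (Fin n → Bool) :=
  {v | ∀ j ∉ A, v j = b j}

lemma bool_eq_not {p q : Bool} (h : p ≠ q) : p = !q := by
  cases p <;> cases q <;> simp_all

lemma bool_ne_ne {p q r : Bool} (h1 : p ≠ r) (h2 : q ≠ r) : p = q := by
  cases p <;> cases q <;> cases r <;> simp_all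

lemma cube_rigid (φ : (Fin i → Bool) → (Fin n → Bool))
    (hinj : Function.Injective φ)
    (hadj : ∀ x y, (hypercube i).Adj x y → (hypercube n).Adj (φ x) (φ y)) :
    ∃ c : Fin i → Fin n, Function.Injective c ∧
      (∀ x k, φ x (c k) = xor (x k) (φ (fun _ => false) (c k))) ∧
      (∀ x j, (∀ k, c k ≠ j) → φ x j = φ (fun _ => false) j) := by
  classical
  set z : Fin i → Bool := fun _ => false with hz
  have diff : ∀ {x y : Fin i → Bool}, (hypercube i).Adj x y →
      ∃ a, (φ x a ≠ φ y a) ∧ ∀ j, j ≠ a → φ x j = φ y j := by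
    intro x y hxy
    obtain ⟨a, ha, hu⟩ := hadj x y hxy
    exact ⟨a, ha, fun j hj => by by_contra hne; exact hj (hu j hne)⟩
  have hdk : ∀ k : Fin i, ∃ a, (φ (unitv k) a ≠ φ z a) ∧
      ∀ j, j ≠ a → φ (unitv k) j = φ z j := fun k => diff (adj_unitv k).symm
  choose c hc1 hc2 using hdk
  have phi_unit : ∀ k j, φ (unitv k) j = if j = c k then !(φ z j) else φ z j := by
    intro k j
    by_cases hj : j = c k
    · subst hj
      rw [if_pos rfl]
      exact bool_eq_not (hc1 k)
    · rw [if_neg hj]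
      exact hc2 k j hj
  have cinj : Function.Injective c := by
    intro k k' hkk
    have : φ (unitv k) = φ (unitv k') := by
      funext j
      rw [phi_unit, phi_unit, hkk]
    have huu := hinj this
    by_contra hne
    have h1 : unitv k k = true := unitv_self k
    have h2 : unitv k' k = false := unitv_ne (fun h => hne h)
    rw [huu, h2] at h1
    exact absurd h1 (by simp)
  set tgt : (Fin i → Bool) → (Fin n → Bool) :=
    fun x j => xor (decide (∃ k, c k = j ∧ x k = true)) (φ z j) with htgt
  have tgt_at : ∀ x k, tgt x (c k) = xor (x k) (φ z (c k)) := by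
    intro x k
    rcases Bool.eq_false_or_eq_true (x k) with h | h
    · have hex : (∃ k', c k' = c k ∧ x k' = true) := ⟨k, rfl, h⟩
      simp [htgt, hex, h]
    · have hne : ¬ (∃ k', c k' = c k ∧ x k' = true) := by
        rintro ⟨k', hk', hx'⟩
        rw [cinj hk', h] at hx'
        exact absurd hx' (by simp)
      simp [htgt, hne, h]
  have tgt_off : ∀ x j, (∀ k, c k ≠ j) → tgt x j = φ z j := by
    intro x j hj
    have hne : ¬ (∃ k, c k = j ∧ x k = true) := by
      rintro ⟨k, hk, -⟩; exact hj k hk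
    simp [htgt, hne]
  have tgt_ext : ∀ (x y : Fin i → Bool) (j), (∀ k, c k = j → x k = y k) →
      tgt x j = tgt y j := by
    intro x y j hxy
    by_cases hj : ∃ k, c k = j
    · obtain ⟨k, rfl⟩ := hj
      rw [tgt_at, tgt_at, hxy k rfl]
    · push_neg at hj
      rw [tgt_off x j hj, tgt_off y j hj]
  have tgt_z : tgt z = φ z := by
    funext j
    have hne : ¬ (∃ k, c k = j ∧ z k = true) := by
      rintro ⟨k, -, hk⟩
      exact absurd hk (by simp [hz])
    simp [htgt, hne]
  have main : ∀ N (x : Fin i → Bool), wtv x = N → φ x = tgt x := by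
    intro N
    induction N using Nat.strong_induction_on with
    | _ N ih =>
      rcases N with _ | N
      · intro x hx
        have hxz : x = z := wtv_eq_zero hx
        rw [hxz, tgt_z]
      rcases N with _ | N
      · intro x hx
        obtain ⟨k, rfl⟩ := wtv_eq_one hx
        funext j
        rw [phi_unit]
        by_cases hj : j = c k
        · subst hj
          rw [if_pos rfl, tgt_at, unitv_self]
          simp
        · rw [if_neg hj]
          have he : tgt (unitv k) j = tgt z j := by
            apply tgt_ext
            intro k' hk'
            have hne : k' ≠ k := by
              rintro rfl; exact hj hk'.symm
            rw [unitv_ne hne, hz]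
          rw [he, tgt_z]
      · -- N+2 case
        intro x hx
        have hcard : 1 < wtv x := by rw [hx]; omega
        obtain ⟨k, hk, l, hl, hkl⟩ := Finset.one_lt_card.1 hcard
        have hxk : x k = true := by simpa using hk
        have hxl : x l = true := by simpa using hl
        set x1 := Function.update x k false with hx1def
        set x2 := Function.update x l false with hx2def
        set x3 := Function.update x1 l false with hx3def
        have hw1 : wtv x1 = N + 1 := by rw [hx1def, wtv_update_false hxk, hx]; omega
        have hw2 : wtv x2 = N + 1 := by rw [hx2def, wtv_update_false hxl, hx]; omega
        have hx1l : x1 l = true := by rw [hx1def, Function.update_of_ne (Ne.symm hkl)]; exact hxl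
        have hx1k : x1 k = false := by rw [hx1def, Function.update_self]
        have hx2k : x2 k = true := by rw [hx2def, Function.update_of_ne hkl]; exact hxk
        have hw3 : wtv x3 = N := by rw [hx3def, wtv_update_false hx1l, hw1]; omega
        have ih1 : φ x1 = tgt x1 := ih (N+1) (by omega) x1 hw1
        have ih2 : φ x2 = tgt x2 := ih (N+1) (by omega) x2 hw2
        have ih3 : φ x3 = tgt x3 := ih N (by omega) x3 hw3
        have hxeq1 : x = Function.update x1 k true := by
          funext j
          by_cases hj : j = k
          · subst hj; rw [Function.update_self]; exact hxk
          · rw [Function.update_of_ne hj, hx1def, Function.update_of_ne hj]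
        have hxeq2 : x = Function.update x2 l true := by
          funext j
          by_cases hj : j = l
          · subst hj; rw [Function.update_self]; exact hxl
          · rw [Function.update_of_ne hj, hx2def, Function.update_of_ne hj]
        have hadj1 : (hypercube i).Adj x1 x := by
          rw [hxeq1]; exact adj_update (by rw [hx1k]; simp)
        have hadj2 : (hypercube i).Adj x2 x := by
          rw [hxeq2]
          refine adj_update ?_
          rw [hx2def, Function.update_self]; simp
        obtain ⟨a, ha, hA⟩ := diff hadj1.symm
        obtain ⟨b, hb, hB⟩ := diff hadj2.symm
        rw [ih1] at ha hA
        rw [ih2] at hb hB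
        -- evaluations of tgt
        have e1 : tgt x1 (c k) = φ z (c k) := by rw [tgt_at, hx1k]; simp
        have e2 : tgt x (c k) = !(φ z (c k)) := by rw [tgt_at, hxk]; simp
        have e3 : ∀ j, j ≠ c k → tgt x j = tgt x1 j := by
          intro j hj
          apply tgt_ext
          intro k' hk'
          have : k' ≠ k := by rintro rfl; exact hj hk'.symm
          rw [hx1def, Function.update_of_ne this]
        have e4 : tgt x1 (c l) = !(φ z (c l)) := by rw [tgt_at, hx1l]; simp
        have e5 : tgt x3 (c l) = φ z (c l) := by
          rw [tgt_at, hx3def, Function.update_self]; simp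
        have e6 : ∀ j, j ≠ c l → tgt x3 j = tgt x1 j := by
          intro j hj
          apply tgt_ext
          intro k' hk'
          have : k' ≠ l := by rintro rfl; exact hj hk'.symm
          rw [hx3def, Function.update_of_ne this]
        have e7 : tgt x2 (c k) = !(φ z (c k)) := by rw [tgt_at, hx2k]; simp
        have e8 : ∀ j, j ≠ c l → tgt x j = tgt x2 j := by
          intro j hj
          apply tgt_ext
          intro k' hk'
          have : k' ≠ l := by rintro rfl; exact hj hk'.symm
          rw [hx2def, Function.update_of_ne this]
        by_cases hak : a = c k
        · subst hak
          funext j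
          by_cases hj : j = c k
          · subst hj
            rw [e2]
            exact bool_eq_not (by rw [← e1]; exact ha)
          · rw [e3 j hj]
            exact hA j hj
        · exfalso
          by_cases hal : a = c l
          · subst hal
            have hphix3 : φ x = φ x3 := by
              rw [ih3]
              funext j
              by_cases hj : j = c l
              · subst hj
                rw [e5]
                have := bool_eq_not (by rw [← e4]; exact ha : φ x (c l) ≠ !(φ z (c l)))
                rw [this]; simp
              · rw [e6 j hj]
                exact hA j hj
            have := hinj hphix3
            have hx3k : x3 k = false := by
              rw [hx3def, Function.update_of_ne hkl, hx1k]
            rw [this, hx3k] at hxk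
            exact absurd hxk (by simp)
          · -- a ∉ {c k, c l}
            have hck_ne_a : c k ≠ a := fun h => hak h.symm
            have hphick : φ x (c k) = φ z (c k) := by
              rw [hA (c k) hck_ne_a, e1]
            have hbck : b = c k := by
              by_contra hbk
              have : φ x (c k) = tgt x2 (c k) := hB (c k) (fun h => hbk h.symm)
              rw [e7] at this
              rw [this] at hphick
              exact absurd hphick (by simp)
            have hab : a = b := by
              by_contra hab
              have h1 : φ x a = tgt x2 a := hB a (fun h => hab h)
              have h2 : tgt x a = tgt x2 a := e8 a hal
              have h3 : tgt x a = tgt x1 a := e3 a hak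
              rw [← h2, h3] at h1
              exact ha h1
            exact hak (hab.trans hbck)
  refine ⟨c, cinj, ?_, ?_⟩
  · intro x k
    rw [main (wtv x) x rfl]
    exact tgt_at x k
  · intro x j hj
    rw [main (wtv x) x rfl]
    exact tgt_off x j hj

end HCAux

namespace HCAux

variable {n i : ℕ}

/-- A subcube induces a hypercube of the right dimension. -/
noncomputable def cubeSetIso (A : Finset (Fin n)) (b : Fin n → Bool) :
    (SimpleGraph.induce (cubeSet A b) (hypercube n)) ≃g hypercube A.card := by
  classical
  refine ⟨⟨fun v k => v.1 ((A.equivFin.symm k : {j // j ∈ A}) : Fin n),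
    fun g => ⟨fun j => if h : j ∈ A then g (A.equivFin ⟨j, h⟩) else b j,
      fun j hj => dif_neg hj⟩, ?_, ?_⟩, ?_⟩
  · intro v
    apply Subtype.ext
    funext j
    by_cases h : j ∈ A
    · simp only [dif_pos h]
      congr 1
      rw [Equiv.symm_apply_apply]
    · exact (dif_neg h).trans (v.2 j h).symm
  · intro g
    funext k
    simp only
    have hmem : ((A.equivFin.symm k : {j // j ∈ A}) : Fin n) ∈ A :=
      (A.equivFin.symm k).2
    rw [dif_pos hmem, Subtype.coe_eta, Equiv.apply_symm_apply]
  · intro v w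
    simp only [Equiv.coe_fn_mk]
    constructor
    · rintro ⟨k, hk, hu⟩
      refine ⟨((A.equivFin.symm k : {j // j ∈ A}) : Fin n), hk, ?_⟩
      intro j hj
      have hjA : j ∈ A := by
        by_contra hjn
        exact hj ((v.2 j hjn).trans (w.2 j hjn).symm)
      have : A.equivFin ⟨j, hjA⟩ = k := by
        apply hu
        simpa using hj
      rw [← this]
      simp
    · rintro ⟨j, hj, hu⟩
      have hjA : j ∈ A := by
        by_contra hjn
        exact hj ((v.2 j hjn).trans (w.2 j hjn).symm)
      refine ⟨A.equivFin ⟨j, hjA⟩, ?_, ?_⟩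
      · simpa using hj
      · intro k' hk'
        have := hu _ hk'
        have h2 : (A.equivFin.symm k' : {j // j ∈ A}) = ⟨j, hjA⟩ := Subtype.ext this
        rw [← h2, Equiv.apply_symm_apply]

/-- Any induced subgraph of the cube isomorphic to a hypercube is a subcube. -/
lemma iso_to_cubeSet {s : Set (Fin n → Bool)}
    (h : Nonempty ((SimpleGraph.induce s (hypercube n)) ≃g hypercube i)) :
    ∃ (A : Finset (Fin n)) (b : Fin n → Bool), A.card = i ∧ s = cubeSet A b := by
  classical
  obtain ⟨e⟩ := h
  set φ : (Fin i → Bool) → (Fin n → Bool) := fun x => (e.symm x : Fin n → Bool) with hφ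
  have hinj : Function.Injective φ := by
    intro x y hxy
    have := Subtype.ext hxy
    exact e.symm.injective this
  have hadjφ : ∀ x y, (hypercube i).Adj x y → (hypercube n).Adj (φ x) (φ y) := by
    intro x y hxy
    exact e.symm.map_rel_iff.2 hxy
  obtain ⟨c, cinj, hat, hoff⟩ := cube_rigid φ hinj hadjφ
  set z : Fin i → Bool := fun _ => false with hz
  refine ⟨Finset.image c Finset.univ, φ z, ?_, ?_⟩
  · rw [Finset.card_image_of_injective _ cinj, Finset.card_univ, Fintype.card_fin]
  · have hrange : s = Set.range φ := by
      ext v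
      constructor
      · intro hv
        exact ⟨e ⟨v, hv⟩, by rw [hφ]; simp⟩
      · rintro ⟨x, rfl⟩
        exact (e.symm x).2
    rw [hrange]
    ext v
    constructor
    · rintro ⟨x, rfl⟩
      intro j hj
      apply hoff
      intro k hk
      exact hj (hk ▸ Finset.mem_image_of_mem c (Finset.mem_univ k))
    · intro hv
      refine ⟨fun k => xor (v (c k)) (φ z (c k)), ?_⟩
      funext j
      by_cases hj : ∃ k, c k = j
      · obtain ⟨k, rfl⟩ := hj
        rw [hat]
        cases hvv : v (c k) <;> cases hzz : φ z (c k) <;> simp [hvv, hzz]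
      · push_neg at hj
        rw [hoff _ j hj]
        have hjA : j ∉ Finset.image c Finset.univ := by
          simp only [Finset.mem_image, Finset.mem_univ, true_and, not_exists]
          exact hj
        exact (hv j hjA).symm

end HCAux

namespace HCAux

variable {n m : ℕ} (f : Fin m → (Fin n → Bool))

/-- the canonical iso between the cube part of the pendant graph and the cube -/
def isoInl (t : Set (Fin n → Bool)) :
    (SimpleGraph.induce (Sum.inl '' t : Set ((Fin n → Bool) ⊕ Fin m))
        (withPendants (hypercube n) m f)) ≃g SimpleGraph.induce t (hypercube n) where
  toFun a := ⟨pd f a.1, by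
    obtain ⟨u, hu, he⟩ := a.2
    rw [← he]; exact hu⟩
  invFun v := ⟨Sum.inl v.1, ⟨v.1, v.2, rfl⟩⟩
  left_inv := by
    rintro ⟨_, u, hu, rfl⟩
    rfl
  right_inv := fun v => rfl
  map_rel_iff' := by
    rintro ⟨_, u, hu, rfl⟩ ⟨_, u', hu', rfl⟩
    exact Iff.rfl

lemma classify (i : ℕ) (s : Set ((Fin n → Bool) ⊕ Fin m)) :
    Nonempty ((SimpleGraph.induce s (withPendants (hypercube n) m f)) ≃g hypercube i)
    ↔ ((∃ (A : Finset (Fin n)) (b : Fin n → Bool), A.card = i ∧ (∀ j ∈ A, b j = false) ∧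
          s = Sum.inl '' cubeSet A b)
       ∨ (i = 0 ∧ ∃ j, s = {Sum.inr j})
       ∨ (i = 1 ∧ ∃ j, s = {Sum.inl (f j), Sum.inr j})) := by
  classical
  constructor
  · rintro ⟨e⟩
    by_cases hp : ∃ j : Fin m, Sum.inr j ∈ s
    · obtain ⟨j, hj⟩ := hp
      right
      -- first: any induced-neighbour of the pendant vertex is `inl (f j)`
      have nbr : ∀ z : ↑s, (withPendants (hypercube n) m f).Adj (Sum.inr j) z.1 →
          z.1 = Sum.inl (f j) := by
        rintro ⟨(u | k), hz⟩ hadj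
        · have : f j = u := hadj
          exact congrArg Sum.inl this.symm
        · exact absurd hadj (by simp [withPendants])
      match i, e with
      | 0, e =>
        refine Or.inl ⟨rfl, j, ?_⟩
        ext x
        simp only [Set.mem_singleton_iff]
        constructor
        · intro hx
          have : e ⟨x, hx⟩ = e ⟨Sum.inr j, hj⟩ := Subsingleton.elim _ _
          have := e.injective this
          exact congrArg Subtype.val this
        · rintro rfl; exact hj
      | 1, e =>
        refine Or.inr ⟨rfl, j, ?_⟩
        set a : ↑s := ⟨Sum.inr j, hj⟩ with ha
        set x := e a with hx
        set y : Fin 1 → Bool := fun k => !(x k) with hy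
        have hxy : (hypercube 1).Adj x y := by
          refine ⟨0, by simp [hy], fun k _ => Subsingleton.elim k 0⟩
        have hadj : (SimpleGraph.induce s (withPendants (hypercube n) m f)).Adj a (e.symm y) := by
          have := e.symm.map_rel_iff.2 hxy
          rwa [hx, RelIso.symm_apply_apply] at this
        have hz : (e.symm y).1 = Sum.inl (f j) := nbr _ hadj
        have hfs : Sum.inl (f j) ∈ s := hz ▸ (e.symm y).2
        ext w
        simp only [Set.mem_insert_iff, Set.mem_singleton_iff]
        constructor
        · intro hw
          have hcase : e ⟨w, hw⟩ = x ∨ e ⟨w, hw⟩ = y := by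
            rcases Bool.eq_false_or_eq_true (e ⟨w, hw⟩ 0) with h0 | h0 <;>
              rcases Bool.eq_false_or_eq_true (x 0) with h1 | h1 <;>
              [ (left; funext k; rw [Subsingleton.elim k 0, h0, h1]);
                (right; funext k; rw [Subsingleton.elim k 0, h0, hy]; simp [h1]);
                (right; funext k; rw [Subsingleton.elim k 0, h0, hy]; simp [h1]);
                (left; funext k; rw [Subsingleton.elim k 0, h0, h1])]
          rcases hcase with hc | hc
          · right
            have : (⟨w, hw⟩ : ↑s) = a := e.injective (by rw [hc, hx])
            exact congrArg Subtype.val this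
          · left
            have : (⟨w, hw⟩ : ↑s) = e.symm y := by
              apply e.injective
              rw [hc, RelIso.apply_symm_apply]
            rw [← hz]
            exact congrArg Subtype.val this
        · rintro (rfl | rfl)
          · exact hfs
          · exact hj
      | (i+2), e =>
        exfalso
        set a : ↑s := ⟨Sum.inr j, hj⟩ with ha
        set x := e a with hx
        set y₁ := Function.update x 0 (!(x 0)) with hy₁
        set y₂ := Function.update x 1 (!(x 1)) with hy₂
        have h01 : (0 : Fin (i+2)) ≠ 1 := by simp [Fin.ext_iff]
        have hadj₁ : (hypercube (i+2)).Adj x y₁ := adj_update (by simp)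
        have hadj₂ : (hypercube (i+2)).Adj x y₂ := adj_update (by simp)
        have hz₁ : (e.symm y₁).1 = Sum.inl (f j) := by
          apply nbr
          have := e.symm.map_rel_iff.2 hadj₁
          rwa [hx, RelIso.symm_apply_apply] at this
        have hz₂ : (e.symm y₂).1 = Sum.inl (f j) := by
          apply nbr
          have := e.symm.map_rel_iff.2 hadj₂
          rwa [hx, RelIso.symm_apply_apply] at this
        have : e.symm y₁ = e.symm y₂ := Subtype.ext (hz₁.trans hz₂.symm)
        have hyy : y₁ = y₂ := e.symm.injective this
        have : y₁ 0 = y₂ 0 := by rw [hyy]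
        rw [hy₁, hy₂, Function.update_self, Function.update_of_ne h01] at this
        exact absurd this (by simp)
    · left
      push_neg at hp
      set t := Sum.inl ⁻¹' s with htdef
      have hs : s = Sum.inl '' t := by
        ext x
        cases x with
        | inl u => simp [htdef]
        | inr j =>
          simp only [Set.mem_image]
          constructor
          · intro h; exact absurd h (hp j)
          · rintro ⟨u, -, h⟩; exact absurd h (by simp)
      rw [hs] at e
      have e' : SimpleGraph.induce t (hypercube n) ≃g hypercube i :=
        (isoInl f t).symm.trans e
      obtain ⟨A, b, hA, hcube⟩ := iso_to_cubeSet ⟨e'⟩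
      refine ⟨A, fun j => if j ∈ A then false else b j, hA, fun j hj => if_pos hj, ?_⟩
      have : cubeSet A b = cubeSet A (fun j => if j ∈ A then false else b j) := by
        ext v
        constructor <;> intro hv j hj
        · show v j = if j ∈ A then false else b j
          rw [if_neg hj]; exact hv j hj
        · have h2 : v j = if j ∈ A then false else b j := hv j hj
          rwa [if_neg hj] at h2
      rw [hs, hcube, this]
  · rintro (⟨A, b, hA, hb, rfl⟩ | ⟨rfl, j, rfl⟩ | ⟨rfl, j, rfl⟩)
    · rw [← hA]
      exact ⟨(isoInl f _).trans (cubeSetIso A b)⟩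
    · refine ⟨⟨⟨fun _ => (fun k => false), fun _ => ⟨Sum.inr j, rfl⟩, ?_, ?_⟩, ?_⟩⟩
      · intro a
        exact Subtype.ext (Set.mem_singleton_iff.1 a.2).symm
      · intro g
        funext k
        exact k.elim0
      · intro a b
        constructor
        · rintro ⟨k, -, -⟩; exact k.elim0
        · intro h
          exfalso
          have ha : a.1 = Sum.inr j := a.2
          have hb' : b.1 = Sum.inr j := b.2
          have h' : (withPendants (hypercube n) m f).Adj (↑a) (↑b) := h
          rw [ha, hb'] at h'
          exact absurd h' (by simp [withPendants])
    · refine ⟨⟨⟨fun a => (fun _ => a.1.isRight),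
        fun g => if g 0 then ⟨Sum.inr j, by simp⟩ else ⟨Sum.inl (f j), by simp⟩, ?_, ?_⟩, ?_⟩⟩
      · rintro ⟨w, hw⟩
        have hw' : w = Sum.inl (f j) ∨ w = Sum.inr j := by
          simpa [Set.mem_insert_iff, Set.mem_singleton_iff] using hw
        rcases hw' with rfl | rfl
        · simp [Sum.isRight]
        · simp [Sum.isRight]
      · intro g
        funext k
        rw [Subsingleton.elim k (0 : Fin 1)]
        rcases Bool.eq_false_or_eq_true (g 0) with h | h <;> simp [h, Sum.isRight]
      · rintro ⟨w₁, h₁⟩ ⟨w₂, h₂⟩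
        have h₁' : w₁ = Sum.inl (f j) ∨ w₁ = Sum.inr j := by
          simpa [Set.mem_insert_iff, Set.mem_singleton_iff] using h₁
        have h₂' : w₂ = Sum.inl (f j) ∨ w₂ = Sum.inr j := by
          simpa [Set.mem_insert_iff, Set.mem_singleton_iff] using h₂
        rcases h₁' with rfl | rfl <;> rcases h₂' with rfl | rfl
        · apply iff_of_false
          · rintro ⟨k, hk, -⟩; exact hk rfl
          · exact fun h => (hypercube n).irrefl h
        · apply iff_of_true
          · exact ⟨0, by simp, fun k _ => Subsingleton.elim k 0⟩
          · exact rfl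
        · apply iff_of_true
          · exact ⟨0, by simp, fun k _ => Subsingleton.elim k 0⟩
          · exact rfl
        · apply iff_of_false
          · rintro ⟨k, hk, -⟩; exact hk rfl
          · exact id

end HCAux

namespace HCAux

variable {n m : ℕ} (f : Fin m → (Fin n → Bool))

lemma mem_base (A : Finset (Fin n)) (b : Fin n → Bool) : b ∈ cubeSet A b :=
  fun _ _ => rfl

lemma mem_iff_exists {A : Finset (Fin n)} (b : Fin n → Bool) (j : Fin n) :
    j ∈ A ↔ ∃ v ∈ cubeSet A b, ∃ w ∈ cubeSet A b, v j ≠ w j := by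
  classical
  constructor
  · intro hj
    set v : Fin n → Bool := fun j' => if j' ∈ A then false else b j' with hv
    have hvmem : v ∈ cubeSet A b := fun j' hj' => if_neg hj'
    set w := Function.update v j true with hw
    have hwmem : w ∈ cubeSet A b := by
      intro j' hj'
      have : j' ≠ j := fun h => hj' (h ▸ hj)
      rw [hw, Function.update_of_ne this]
      exact hvmem j' hj'
    refine ⟨v, hvmem, w, hwmem, ?_⟩
    rw [hv, hw]
    simp [Function.update_self, if_pos hj]
  · rintro ⟨v, hv, w, hw, hvw⟩
    by_contra hj
    exact hvw ((hv j hj).trans (hw j hj).symm)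

lemma cubeSet_injective {A A' : Finset (Fin n)} {b b' : Fin n → Bool}
    (hb : ∀ j ∈ A, b j = false) (hb' : ∀ j ∈ A', b' j = false)
    (h : cubeSet A b = cubeSet A' b') : A = A' ∧ b = b' := by
  have hA : A = A' := by
    ext j
    rw [mem_iff_exists b j, h, ← mem_iff_exists b' j]
  subst hA
  refine ⟨rfl, funext fun j => ?_⟩
  by_cases hj : j ∈ A
  · rw [hb j hj, hb' j hj]
  · have := (h ▸ mem_base A b) j hj
    exact this

lemma card_S1 (i : ℕ) :
    Nat.card {s : Set ((Fin n → Bool) ⊕ Fin m) //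
      ∃ (A : Finset (Fin n)) (b : Fin n → Bool), A.card = i ∧ (∀ j ∈ A, b j = false) ∧
        s = Sum.inl '' cubeSet A b} = n.choose i * 2 ^ (n - i) := by
  classical
  have hbij : Function.Bijective
      (fun p : (Σ A : {A : Finset (Fin n) // A.card = i},
          {b : Fin n → Bool // ∀ j ∈ A.1, b j = false}) =>
        (⟨Sum.inl '' cubeSet p.1.1 p.2.1, p.1.1, p.2.1, p.1.2, p.2.2, rfl⟩ :
          {s : Set ((Fin n → Bool) ⊕ Fin m) //
            ∃ (A : Finset (Fin n)) (b : Fin n → Bool), A.card = i ∧ (∀ j ∈ A, b j = false) ∧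
              s = Sum.inl '' cubeSet A b})) := by
    constructor
    · rintro ⟨⟨A, hA⟩, ⟨b, hb⟩⟩ ⟨⟨A', hA'⟩, ⟨b', hb'⟩⟩ hpq
      have hsets : Sum.inl '' cubeSet A b = Sum.inl '' cubeSet A' b' :=
        congrArg Subtype.val hpq
      have hcs : cubeSet A b = cubeSet A' b' :=
        (Set.image_injective.2 Sum.inl_injective) hsets
      obtain ⟨h1, h2⟩ := cubeSet_injective hb hb' hcs
      subst h1; subst h2
      rfl
    · rintro ⟨s, A, b, hA, hb, rfl⟩
      exact ⟨⟨⟨A, hA⟩, ⟨b, hb⟩⟩, rfl⟩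
  rw [← Nat.card_eq_of_bijective _ hbij, Nat.card_eq_fintype_card, Fintype.card_sigma]
  have hfiber : ∀ A : {A : Finset (Fin n) // A.card = i},
      Fintype.card {b : Fin n → Bool // ∀ j ∈ A.1, b j = false} = 2 ^ (n - i) := by
    intro A
    have e : {b : Fin n → Bool // ∀ j ∈ A.1, b j = false} ≃
        ({j : Fin n // j ∉ A.1} → Bool) := by
      refine ⟨fun b j => b.1 j.1,
        fun g => ⟨fun j => if h : j ∈ A.1 then false else g ⟨j, h⟩,
          fun j hj => dif_pos hj⟩, ?_, ?_⟩
      · intro b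
        apply Subtype.ext
        funext j
        show (if h : j ∈ A.1 then false else b.1 j) = b.1 j
        by_cases h : j ∈ A.1
        · rw [dif_pos h, b.2 j h]
        · rw [dif_neg h]
      · intro g
        funext j
        show (if h : j.1 ∈ A.1 then false else g ⟨j.1, h⟩) = g j
        rw [dif_neg j.2]
    rw [Fintype.card_congr e, Fintype.card_fun]
    congr 1
    rw [Fintype.card_subtype_compl, Fintype.card_fin]
    congr 1
    have : Fintype.card {j : Fin n // j ∈ A.1} = A.1.card := Fintype.card_coe A.1
    rw [this, A.2]
  calc (∑ A : {A : Finset (Fin n) // A.card = i},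
        Fintype.card {b : Fin n → Bool // ∀ j ∈ A.1, b j = false})
      = ∑ _A : {A : Finset (Fin n) // A.card = i}, 2 ^ (n - i) :=
        Finset.sum_congr rfl (fun A _ => hfiber A)
    _ = Fintype.card {A : Finset (Fin n) // A.card = i} * 2 ^ (n - i) := by
        rw [Finset.sum_const, Finset.card_univ, smul_eq_mul]
    _ = n.choose i * 2 ^ (n - i) := by
        rw [Fintype.card_finset_len, Fintype.card_fin]

lemma card_S2 (i : ℕ) :
    Nat.card {s : Set ((Fin n → Bool) ⊕ Fin m) //
      (i = 0 ∧ ∃ j, s = {Sum.inr j}) ∨ (i = 1 ∧ ∃ j, s = {Sum.inl (f j), Sum.inr j})} =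
      if i ≤ 1 then m else 0 := by
  classical
  match i with
  | 0 =>
    rw [if_pos (by omega)]
    have hbij : Function.Bijective
        (fun j : Fin m => (⟨({Sum.inr j} : Set ((Fin n → Bool) ⊕ Fin m)),
          Or.inl ⟨rfl, j, rfl⟩⟩ : {s : Set ((Fin n → Bool) ⊕ Fin m) //
            (0 = 0 ∧ ∃ j, s = {Sum.inr j}) ∨ (0 = 1 ∧ ∃ j, s = {Sum.inl (f j), Sum.inr j})})) := by
      constructor
      · intro j j' h
        have := congrArg Subtype.val h
        have h2 : Sum.inr j ∈ ({Sum.inr j'} : Set ((Fin n → Bool) ⊕ Fin m)) :=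
          (Set.ext_iff.1 this (Sum.inr j)).1 rfl
        exact Sum.inr.inj (Set.mem_singleton_iff.1 h2)
      · rintro ⟨s, ⟨-, j, rfl⟩ | ⟨h1, -⟩⟩
        · exact ⟨j, rfl⟩
        · exact absurd h1 (by omega)
    rw [← Nat.card_eq_of_bijective _ hbij, Nat.card_eq_fintype_card, Fintype.card_fin]
  | 1 =>
    rw [if_pos (by omega)]
    have hbij : Function.Bijective
        (fun j : Fin m => (⟨({Sum.inl (f j), Sum.inr j} : Set ((Fin n → Bool) ⊕ Fin m)),
          Or.inr ⟨rfl, j, rfl⟩⟩ : {s : Set ((Fin n → Bool) ⊕ Fin m) //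
            (1 = 0 ∧ ∃ j, s = {Sum.inr j}) ∨ (1 = 1 ∧ ∃ j, s = {Sum.inl (f j), Sum.inr j})})) := by
      constructor
      · intro j j' h
        have hv := congrArg Subtype.val h
        have h2 : (Sum.inr j : (Fin n → Bool) ⊕ Fin m) ∈
            ({Sum.inl (f j'), Sum.inr j'} : Set ((Fin n → Bool) ⊕ Fin m)) :=
          (Set.ext_iff.1 hv (Sum.inr j)).1 (Or.inr rfl)
        rcases h2 with h2 | h2
        · exact absurd h2 (by simp)
        · exact Sum.inr.inj (Set.mem_singleton_iff.1 h2)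
      · rintro ⟨s, ⟨h1, -⟩ | ⟨-, j, rfl⟩⟩
        · exact absurd h1 (by omega)
        · exact ⟨j, rfl⟩
    rw [← Nat.card_eq_of_bijective _ hbij, Nat.card_eq_fintype_card, Fintype.card_fin]
  | (i+2) =>
    rw [if_neg (by omega)]
    have hempty : IsEmpty {s : Set ((Fin n → Bool) ⊕ Fin m) //
        (i + 2 = 0 ∧ ∃ j, s = {Sum.inr j}) ∨ (i + 2 = 1 ∧ ∃ j, s = {Sum.inl (f j), Sum.inr j})} := by
      refine ⟨?_⟩
      rintro ⟨s, ⟨h1, -⟩ | ⟨h1, -⟩⟩ <;> omega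
    exact Nat.card_of_isEmpty

lemma cubeCount_withPendants (i : ℕ) :
    cubeCount (withPendants (hypercube n) m f) i =
      n.choose i * 2 ^ (n - i) + (if i ≤ 1 then m else 0) := by
  classical
  rw [cubeCount]
  rw [Nat.card_congr (Equiv.subtypeEquivRight (fun s => classify f i s))]
  have hdisj : Disjoint
      (fun s : Set ((Fin n → Bool) ⊕ Fin m) =>
        ∃ (A : Finset (Fin n)) (b : Fin n → Bool), A.card = i ∧ (∀ j ∈ A, b j = false) ∧
          s = Sum.inl '' cubeSet A b)
      (fun s : Set ((Fin n → Bool) ⊕ Fin m) =>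
        (i = 0 ∧ ∃ j, s = {Sum.inr j}) ∨ (i = 1 ∧ ∃ j, s = {Sum.inl (f j), Sum.inr j})) := by
    rw [Pi.disjoint_iff]
    intro s
    rw [Prop.disjoint_iff]
    rintro ⟨⟨A, b, -, -, rfl⟩, h2⟩
    rcases h2 with ⟨-, j, hj⟩ | ⟨-, j, hj⟩
    · have hb : (Sum.inl b : (Fin n → Bool) ⊕ Fin m) ∈ (Sum.inl '' cubeSet A b : Set ((Fin n → Bool) ⊕ Fin m)) := Set.mem_image_of_mem Sum.inl (mem_base A b)
      rw [hj] at hb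
      exact absurd (Set.mem_singleton_iff.1 hb) (by simp)
    · have hb : Sum.inr j ∈ Sum.inl '' cubeSet A b := by
        rw [hj]; exact Or.inr rfl
      obtain ⟨u, -, hu⟩ := hb
      exact absurd hu (by simp)
  rw [Nat.card_congr (subtypeOrEquiv _ _ hdisj), Nat.card_sum, card_S1, card_S2]

end HCAux

namespace HCAux

variable {n m : ℕ} (f : Fin m → (Fin n → Bool))

lemma card_V : Nat.card ((Fin n → Bool) ⊕ Fin m) = 2 ^ n + m := by
  rw [Nat.card_sum, Nat.card_eq_fintype_card, Nat.card_eq_fintype_card,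
    Fintype.card_fun, Fintype.card_fin, Fintype.card_bool, Fintype.card_fin]

lemma cubePoly_eq (hn : 1 ≤ n) :
    cubePoly (withPendants (hypercube n) m f) =
      (Polynomial.X + Polynomial.C 2) ^ n + Polynomial.C m * (Polynomial.X + 1) := by
  classical
  apply Polynomial.ext
  intro k
  have hN : Nat.card ((Fin n → Bool) ⊕ Fin m) = 2 ^ n + m := card_V
  rw [cubePoly]
  rw [Polynomial.finset_sum_coeff]
  simp only [Polynomial.coeff_C_mul, Polynomial.coeff_X_pow, mul_ite, mul_one, mul_zero]
  rw [Finset.sum_ite_eq (Finset.range (Nat.card ((Fin n → Bool) ⊕ Fin m) + 1)) k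
    (fun i => cubeCount (withPendants (hypercube n) m f) i)]
  rw [Polynomial.coeff_add, Polynomial.coeff_X_add_C_pow, Polynomial.coeff_C_mul,
    Polynomial.coeff_add, Polynomial.coeff_one, Polynomial.coeff_X]
  by_cases hk : k ∈ Finset.range (Nat.card ((Fin n → Bool) ⊕ Fin m) + 1)
  · rw [if_pos hk, cubeCount_withPendants f k]
    have h2n : n < 2 ^ n := Nat.lt_two_pow_self
    match k with
    | 0 => simp [mul_comm]
    | 1 => simp [mul_comm]
    | (k+2) =>
      rw [if_neg (by omega), mul_comm]
      simp
  · rw [if_neg hk]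
    simp only [Finset.mem_range, not_lt] at hk
    rw [hN] at hk
    have h2n : n < 2 ^ n := Nat.lt_two_pow_self
    have hc : n.choose k = 0 := Nat.choose_eq_zero_of_lt (by omega)
    rw [hc, if_neg (by omega : ¬ (1 : ℕ) = k), if_neg (by omega : ¬ k = 0)]
    simp

lemma not_unimodal (hn : 9 ≤ n) (hm : ((n ^ 2 - 5 * n) / 2) * 2 ^ (n - 2) + 1 ≤ m) :
    ¬ PolyUnimodal (cubePoly (withPendants (hypercube n) m f)) := by
  have hpoly := cubePoly_eq f (by omega)
  set P := cubePoly (withPendants (hypercube n) m f) with hP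
  have hcoeff : ∀ k, P.coeff k = 2 ^ (n - k) * n.choose k +
      m * ((if 1 = k then 1 else 0) + if k = 0 then 1 else 0) := by
    intro k
    rw [hpoly, Polynomial.coeff_add, Polynomial.coeff_X_add_C_pow, Polynomial.coeff_C_mul,
      Polynomial.coeff_add, Polynomial.coeff_one, Polynomial.coeff_X, Nat.cast_id]
  have hc1 : P.coeff 1 = 2 ^ (n - 1) * n + m := by
    rw [hcoeff 1, Nat.choose_one_right]
    simp
  have hc2 : P.coeff 2 = 2 ^ (n - 2) * n.choose 2 := by
    rw [hcoeff 2]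
    simp
  have hc3 : P.coeff 3 = 2 ^ (n - 3) * n.choose 3 := by
    rw [hcoeff 3]
    simp
  -- arithmetic: q = n(n-1)/2 and r = (n²-5n)/2 satisfy q = r + 2n
  have h5n : 5 * n ≤ n * n := by nlinarith
  have heven1 : 2 ∣ n * (n - 1) := by
    rcases Nat.even_or_odd n with ⟨t, ht⟩ | ⟨t, ht⟩
    · exact ⟨t * (n - 1), by rw [ht]; ring⟩
    · have h1 : n - 1 = 2 * t := by omega
      exact ⟨n * t, by rw [h1]; ring⟩
  have heven2 : 2 ∣ n * (n - 5) := by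
    rcases Nat.even_or_odd n with ⟨t, ht⟩ | ⟨t, ht⟩
    · exact ⟨t * (n - 5), by rw [ht]; ring⟩
    · have h1 : n - 5 = 2 * (t - 2) := by omega
      exact ⟨n * (t - 2), by rw [h1]; ring⟩
  have hsub1 : n * (n - 1) = n * n - n * 1 := Nat.mul_sub n n 1
  have hsub2 : n * (n - 5) = n * n - n * 5 := Nat.mul_sub n n 5
  have h2q : n.choose 2 * 2 = n * (n - 1) := by
    rw [Nat.choose_two_right]
    exact Nat.div_mul_cancel heven1
  have h2r : ((n ^ 2 - 5 * n) / 2) * 2 = n * (n - 5) := by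
    have hrw : n ^ 2 - 5 * n = n * (n - 5) := by
      rw [hsub2, pow_two]
      omega
    rw [hrw]
    exact Nat.div_mul_cancel heven2
  set r := (n ^ 2 - 5 * n) / 2 with hr
  have hq : n.choose 2 = r + 2 * n := by
    rw [hsub1] at h2q
    rw [hsub2] at h2r
    have hmul1 : n * 1 = n := by ring
    rw [hmul1] at h2q
    omega
  have hpow : 2 ^ (n - 2) * 2 = 2 ^ (n - 1) := by
    rw [← pow_succ]
    congr 1
    omega
  have h12 : P.coeff 2 < P.coeff 1 := by
    rw [hc1, hc2, hq]
    have hexp : 2 ^ (n - 2) * (r + 2 * n) = 2 ^ (n - 2) * r + 2 ^ (n - 1) * n := by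
      rw [mul_add, ← hpow]
      ring
    have hm' : 2 ^ (n - 2) * r + 1 ≤ m := by
      rw [mul_comm]
      exact hm
    omega
  have h23 : P.coeff 2 < P.coeff 3 := by
    rw [hc2, hc3]
    have hid : n.choose 3 * 3 = n.choose 2 * (n - 2) := Nat.choose_succ_right_eq n 2
    have hpos : 0 < n.choose 2 := Nat.choose_pos (by omega)
    have h7 : n.choose 2 * 7 ≤ n.choose 2 * (n - 2) :=
      Nat.mul_le_mul_left _ (by omega)
    have h2c : 2 * n.choose 2 < n.choose 3 := by omega
    have hpow2 : 2 ^ (n - 2) = 2 ^ (n - 3) * 2 := by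
      rw [← pow_succ]
      congr 1
      omega
    calc 2 ^ (n - 2) * n.choose 2 = 2 ^ (n - 3) * (2 * n.choose 2) := by
          rw [hpow2]; ring
      _ < 2 ^ (n - 3) * n.choose 3 :=
          mul_lt_mul_of_pos_left h2c (by positivity)
  rintro ⟨M, hup, hdown⟩
  by_cases hM : 2 ≤ M
  · have h := hup 1 (by omega)
    norm_num at h
    omega
  · have h := hdown 2 (by omega)
    norm_num at h
    omega

end HCAux

/-- For `n ≥ 1`, the graph `G` obtained from the hypercube `Q_n` by
attaching `m` pendant vertices is a median graph with `C(G,x) = (x+2)^n + m·(x+1)`;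
moreover if `n ≥ 9` and `m ≥ ((n² − 5n)/2)·2^(n−2) + 1`, then `C(G,x)` is not unimodal
(hence cube polynomials of median graphs need not be unimodal). -/
theorem cubePoly_hypercube_withPendants (n m : ℕ) (hn : 1 ≤ n)
    (f : Fin m → (Fin n → Bool)) :
    IsMedianGraph (withPendants (hypercube n) m f) ∧
    cubePoly (withPendants (hypercube n) m f) =
      (Polynomial.X + Polynomial.C 2) ^ n + Polynomial.C m * (Polynomial.X + 1) ∧
    (9 ≤ n → ((n ^ 2 - 5 * n) / 2) * 2 ^ (n - 2) + 1 ≤ m →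
      ¬ PolyUnimodal (cubePoly (withPendants (hypercube n) m f))) :=
  ⟨HCAux.median_withPendants f, HCAux.cubePoly_eq f hn,
    fun h9 hm => HCAux.not_unimodal f h9 hm⟩
end
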